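/- arXiv:1303.4785 — 7 statements merged into one kernel-verified Lean document; each statement's English description precedes it below -/
import Mathlib

section
/- For all u, v in the s-ball V_s, the gamma factor satisfies the Möbius gamma identity γ_{u ⊕_M v} = γ_u · γ_v · √(1 + (2/s²)·⟨u,v⟩ + (1/s⁴)·‖u‖²·‖v‖²); in particular ‖u ⊕_M v‖ < s, so that Möbius addition is a binary operation on the ball V_s. -/
open scoped RealInnerProductSpace

noncomputable def gamma {V : Type*} [NormedAddCommGroup V] [InnerProductSpace ℝ V]
    (c : ℝ) (u : V) : ℝ :=
  1 / Real.sqrt (1 - ‖u‖ ^ 2 / c ^ 2)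

noncomputable def eAdd {V : Type*} [NormedAddCommGroup V] [InnerProductSpace ℝ V]
    (c : ℝ) (u v : V) : V :=
  (1 / (1 + ⟪u, v⟫ / c ^ 2)) •
    (u + (1 / gamma c u) • v +
      ((1 / c ^ 2) * (gamma c u / (1 + gamma c u)) * ⟪u, v⟫) • u)

noncomputable def eGyr {V : Type*} [NormedAddCommGroup V] [InnerProductSpace ℝ V]
    (c : ℝ) (u v w : V) : V :=
  eAdd c (-(eAdd c u v)) (eAdd c u (eAdd c v w))

noncomputable def eCoadd {V : Type*} [NormedAddCommGroup V] [InnerProductSpace ℝ V]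
    (c : ℝ) (u v : V) : V :=
  eAdd c u (eGyr c u (-v) v)

noncomputable def mAdd {V : Type*} [NormedAddCommGroup V] [InnerProductSpace ℝ V]
    (s : ℝ) (u v : V) : V :=
  (1 / (1 + (2 / s ^ 2) * ⟪u, v⟫ + (1 / s ^ 4) * ‖u‖ ^ 2 * ‖v‖ ^ 2)) •
    ((1 + (2 / s ^ 2) * ⟪u, v⟫ + (1 / s ^ 2) * ‖v‖ ^ 2) • u +
      (1 - (1 / s ^ 2) * ‖u‖ ^ 2) • v)

noncomputable def mGyr {V : Type*} [NormedAddCommGroup V] [InnerProductSpace ℝ V]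
    (s : ℝ) (u v w : V) : V :=
  mAdd s (-(mAdd s u v)) (mAdd s u (mAdd s v w))

noncomputable def mCoadd {V : Type*} [NormedAddCommGroup V] [InnerProductSpace ℝ V]
    (s : ℝ) (u v : V) : V :=
  mAdd s u (mGyr s u (-v) v)

noncomputable def artanh (x : ℝ) : ℝ :=
  (1 / 2) * Real.log ((1 + x) / (1 - x))

open Classical in
noncomputable def sMul {V : Type*} [NormedAddCommGroup V] [InnerProductSpace ℝ V]
    (c : ℝ) (r : ℝ) (v : V) : V :=
  if v = 0 then 0 else (c * Real.tanh (r * artanh (‖v‖ / c)) / ‖v‖) • v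

variable {V : Type*} [NormedAddCommGroup V] [InnerProductSpace ℝ V]


private lemma mobius_key_aux (s nu nv ip m : ℝ) (hs : s ≠ 0)
    (hD2 : s^4 + 2*s^2*ip + nu^2*nv^2 ≠ 0)
    (hm : m = ((1 + 2/s^2*ip + 1/s^2*nv^2)^2*nu^2 +
        2*((1 + 2/s^2*ip + 1/s^2*nv^2)*(1 - 1/s^2*nu^2))*ip +
        (1 - 1/s^2*nu^2)^2*nv^2)/(1 + 2/s^2*ip + 1/s^4*nu^2*nv^2)^2) :
    1 - m/s^2 = (1 - nu^2/s^2)*(1 - nv^2/s^2)/(1 + 2/s^2*ip + 1/s^4*nu^2*nv^2) := by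
  subst hm
  have hD : (1 + 2/s^2*ip + 1/s^4*nu^2*nv^2) = (s^4 + 2*s^2*ip + nu^2*nv^2)/s^4 := by
    field_simp
  rw [hD]
  have hD3 : s^2*(s^2+2*ip) + nv^2*nu^2 ≠ 0 := by convert hD2 using 1; ring
  field_simp
  ring

theorem mobius_gamma_identity (s : ℝ) (hs : 0 < s) (u v : V)
    (hu : ‖u‖ < s) (hv : ‖v‖ < s) :
    gamma s (mAdd s u v) =
      gamma s u * gamma s v *
        Real.sqrt (1 + (2 / s ^ 2) * ⟪u, v⟫ + (1 / s ^ 4) * ‖u‖ ^ 2 * ‖v‖ ^ 2) ∧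
    ‖mAdd s u v‖ < s := by

  have hs2 : (0:ℝ) < s^2 := by positivity
  have hip : -(‖u‖*‖v‖) ≤ ⟪u,v⟫ := neg_le_of_abs_le (abs_real_inner_le_norm u v)
  have hab : ‖u‖*‖v‖ < s*s := mul_lt_mul'' hu hv (norm_nonneg u) (norm_nonneg v)
  have habs : 0 < s*s - ‖u‖*‖v‖ := sub_pos.mpr hab
  have hD2 : (0:ℝ) < s^4 + 2*s^2*⟪u,v⟫ + ‖u‖^2*‖v‖^2 := by
    nlinarith [sq_nonneg (s*s - ‖u‖*‖v‖)]
  have hDeq : 1 + (2 / s ^ 2) * ⟪u, v⟫ + (1 / s ^ 4) * ‖u‖ ^ 2 * ‖v‖ ^ 2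
      = (s^4 + 2*s^2*⟪u,v⟫ + ‖u‖^2*‖v‖^2)/s^4 := by
    field_simp
  have hD : 0 < 1 + (2 / s ^ 2) * ⟪u, v⟫ + (1 / s ^ 4) * ‖u‖ ^ 2 * ‖v‖ ^ 2 := by
    rw [hDeq]; positivity
  have hw : ‖(1 + (2 / s ^ 2) * ⟪u, v⟫ + (1 / s ^ 2) * ‖v‖ ^ 2) • u +
      (1 - (1 / s ^ 2) * ‖u‖ ^ 2) • v‖^2
      = (1 + (2 / s ^ 2) * ⟪u, v⟫ + (1 / s ^ 2) * ‖v‖ ^ 2)^2*‖u‖^2 +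
        2*((1 + (2 / s ^ 2) * ⟪u, v⟫ + (1 / s ^ 2) * ‖v‖ ^ 2)*(1 - (1 / s ^ 2) * ‖u‖ ^ 2))*⟪u,v⟫ +
        (1 - (1 / s ^ 2) * ‖u‖ ^ 2)^2*‖v‖^2 := by
    rw [← real_inner_self_eq_norm_sq, real_inner_add_add_self]
    simp only [real_inner_smul_left, real_inner_smul_right]
    simp only [real_inner_self_eq_norm_sq]
    ring
  have hnorm : ‖mAdd s u v‖^2
      = ((1 + (2 / s ^ 2) * ⟪u, v⟫ + (1 / s ^ 2) * ‖v‖ ^ 2)^2*‖u‖^2 +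
        2*((1 + (2 / s ^ 2) * ⟪u, v⟫ + (1 / s ^ 2) * ‖v‖ ^ 2)*(1 - (1 / s ^ 2) * ‖u‖ ^ 2))*⟪u,v⟫ +
        (1 - (1 / s ^ 2) * ‖u‖ ^ 2)^2*‖v‖^2) /
        (1 + (2 / s ^ 2) * ⟪u, v⟫ + (1 / s ^ 4) * ‖u‖ ^ 2 * ‖v‖ ^ 2)^2 := by
    rw [mAdd, norm_smul, mul_pow, hw, Real.norm_eq_abs,
      abs_of_pos (by positivity : (0:ℝ) < 1 / (1 + (2 / s ^ 2) * ⟪u, v⟫ + (1 / s ^ 4) * ‖u‖ ^ 2 * ‖v‖ ^ 2))]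
    rw [div_pow, one_pow, div_mul_eq_mul_div, one_mul]
  have key : 1 - ‖mAdd s u v‖^2/s^2 =
      (1 - ‖u‖^2/s^2)*(1 - ‖v‖^2/s^2)/(1 + (2 / s ^ 2) * ⟪u, v⟫ + (1 / s ^ 4) * ‖u‖ ^ 2 * ‖v‖ ^ 2) :=
    mobius_key_aux s ‖u‖ ‖v‖ ⟪u,v⟫ _ hs.ne' hD2.ne' hnorm
  have hfa : (0:ℝ) < 1 - ‖u‖^2/s^2 := by
    rw [sub_pos, div_lt_one hs2]
    exact pow_lt_pow_left₀ hu (norm_nonneg u) two_ne_zero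
  have hfb : (0:ℝ) < 1 - ‖v‖^2/s^2 := by
    rw [sub_pos, div_lt_one hs2]
    exact pow_lt_pow_left₀ hv (norm_nonneg v) two_ne_zero
  have hfm : (0:ℝ) < 1 - ‖mAdd s u v‖^2/s^2 := by
    rw [key]; positivity
  have hlt : ‖mAdd s u v‖ < s := by
    rw [sub_pos, div_lt_one hs2] at hfm
    exact lt_of_pow_lt_pow_left₀ 2 hs.le hfm
  refine ⟨?_, hlt⟩
  rw [gamma, gamma, gamma, key,
    Real.sqrt_div (by positivity : (0:ℝ) ≤ (1 - ‖u‖^2/s^2)*(1 - ‖v‖^2/s^2)),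
    Real.sqrt_mul hfa.le, one_div_div]
  ring
end

section
/- For all u, v in the c-ball V_c, the gamma factor satisfies the Einstein gamma identity γ_{u ⊕ v} = γ_u · γ_v · (1 + ⟨u,v⟩/c²); in particular ‖u ⊕ v‖ < c, so that Einstein addition is a binary operation on the ball V_c. -/
open scoped RealInnerProductSpace

variable {V : Type*} [NormedAddCommGroup V] [InnerProductSpace ℝ V]

private lemma einstein_key_alg (c s p b : ℝ) (hc : c ≠ 0) (hs : s ≠ 0)
    (h1s : 1 + s ≠ 0) (hD : 1 + p / c ^ 2 ≠ 0) :
    1 - (1 / (1 + p / c ^ 2)) ^ 2 *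
        ((1 + p / (c ^ 2 * (1 + s))) ^ 2 * (c ^ 2 * (1 - s ^ 2)) +
          2 * (1 + p / (c ^ 2 * (1 + s))) * s * p + s ^ 2 * b) / c ^ 2
      = s ^ 2 * (1 - b / c ^ 2) / (1 + p / c ^ 2) ^ 2 := by
  have hD' : c ^ 2 + p ≠ 0 := by
    intro h; apply hD
    have hp : p = -c ^ 2 := by linarith
    rw [hp, neg_div, div_self (pow_ne_zero 2 hc)]; ring
  field_simp
  ring

theorem einstein_gamma_identity (c : ℝ) (hc : 0 < c) (u v : V)
    (hu : ‖u‖ < c) (hv : ‖v‖ < c) :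
    gamma c (eAdd c u v) = gamma c u * gamma c v * (1 + ⟪u, v⟫ / c ^ 2) ∧
    ‖eAdd c u v‖ < c := by
  have hc2 : (0:ℝ) < c ^ 2 := by positivity
  have hA : (0:ℝ) < 1 - ‖u‖ ^ 2 / c ^ 2 := by
    rw [sub_pos, div_lt_one hc2]
    exact pow_lt_pow_left₀ hu (norm_nonneg u) (by norm_num)
  have hB : (0:ℝ) < 1 - ‖v‖ ^ 2 / c ^ 2 := by
    rw [sub_pos, div_lt_one hc2]
    exact pow_lt_pow_left₀ hv (norm_nonneg v) (by norm_num)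
  have hpabs : |(⟪u, v⟫ : ℝ)| < c ^ 2 := by
    calc |(⟪u, v⟫ : ℝ)| ≤ ‖u‖ * ‖v‖ := abs_real_inner_le_norm u v
    _ < c * c := by nlinarith [norm_nonneg u, norm_nonneg v]
    _ = c ^ 2 := (sq c).symm
  have hD : (0:ℝ) < 1 + ⟪u, v⟫ / c ^ 2 := by
    rcases abs_lt.mp hpabs with ⟨h1, h2⟩
    have : -(1:ℝ) < ⟪u, v⟫ / c ^ 2 := by
      rw [lt_div_iff₀ hc2]; linarith
    linarith
  obtain ⟨s, hsdef⟩ : ∃ x : ℝ, x = Real.sqrt (1 - ‖u‖ ^ 2 / c ^ 2) := ⟨_, rfl⟩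
  obtain ⟨t, htdef⟩ : ∃ x : ℝ, x = Real.sqrt (1 - ‖v‖ ^ 2 / c ^ 2) := ⟨_, rfl⟩
  have hs0 : 0 < s := hsdef ▸ Real.sqrt_pos.mpr hA
  have ht0 : 0 < t := htdef ▸ Real.sqrt_pos.mpr hB
  have hs2 : s ^ 2 = 1 - ‖u‖ ^ 2 / c ^ 2 := by rw [hsdef]; exact Real.sq_sqrt hA.le
  have ht2 : t ^ 2 = 1 - ‖v‖ ^ 2 / c ^ 2 := by rw [htdef]; exact Real.sq_sqrt hB.le
  have hgu : gamma c u = 1 / s := by rw [gamma, hsdef]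
  have hgv : gamma c v = 1 / t := by rw [gamma, htdef]
  have h1s : (1:ℝ) + s ≠ 0 := by positivity
  have ha' : ‖u‖ ^ 2 = c ^ 2 * (1 - s ^ 2) := by rw [hs2]; field_simp; ring
  have headd : eAdd c u v =
      (1 / (1 + ⟪u, v⟫ / c ^ 2)) •
        ((1 + ⟪u, v⟫ / (c ^ 2 * (1 + s))) • u + s • v) := by
    rw [eAdd, hgu]
    congr 1
    have h' : (1:ℝ) / s / (1 + 1 / s) = 1 / (1 + s) := by
      rw [div_div, mul_add, mul_one, mul_one_div, div_self (ne_of_gt hs0), add_comm]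
    have hsc : (1 / c ^ 2) * ((1 / s) / (1 + 1 / s)) * ⟪u, v⟫
        = ⟪u, v⟫ / (c ^ 2 * (1 + s)) := by
      rw [h', div_mul_div_comm, one_mul, one_div_mul_eq_div]
    rw [hsc, one_div_one_div]
    module
  have hw2 : ‖(1 + ⟪u, v⟫ / (c ^ 2 * (1 + s))) • u + s • v‖ ^ 2 =
      (1 + ⟪u, v⟫ / (c ^ 2 * (1 + s))) ^ 2 * (c ^ 2 * (1 - s ^ 2)) +
        2 * (1 + ⟪u, v⟫ / (c ^ 2 * (1 + s))) * s * ⟪u, v⟫ + s ^ 2 * ‖v‖ ^ 2 := by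
    rw [← real_inner_self_eq_norm_sq, inner_add_add_self]
    simp only [real_inner_smul_left, real_inner_smul_right]
    rw [real_inner_self_eq_norm_sq, real_inner_self_eq_norm_sq,
      real_inner_comm v u, ha']
    ring
  have hnorm2 : ‖eAdd c u v‖ ^ 2 =
      (1 / (1 + ⟪u, v⟫ / c ^ 2)) ^ 2 *
        ((1 + ⟪u, v⟫ / (c ^ 2 * (1 + s))) ^ 2 * (c ^ 2 * (1 - s ^ 2)) +
          2 * (1 + ⟪u, v⟫ / (c ^ 2 * (1 + s))) * s * ⟪u, v⟫ + s ^ 2 * ‖v‖ ^ 2) := by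
    rw [headd, norm_smul, Real.norm_eq_abs, abs_of_pos (by positivity), mul_pow, hw2]
  have hkey : 1 - ‖eAdd c u v‖ ^ 2 / c ^ 2 =
      s ^ 2 * t ^ 2 / (1 + ⟪u, v⟫ / c ^ 2) ^ 2 := by
    rw [hnorm2, ht2]
    exact einstein_key_alg c s ⟪u, v⟫ (‖v‖ ^ 2) (ne_of_gt hc) (ne_of_gt hs0)
      h1s (ne_of_gt hD)
  have hE : (0:ℝ) < 1 - ‖eAdd c u v‖ ^ 2 / c ^ 2 := by
    rw [hkey]; positivity
  have hlt : ‖eAdd c u v‖ < c := by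
    have h2 : ‖eAdd c u v‖ ^ 2 < c ^ 2 :=
      (div_lt_one hc2).mp (by linarith)
    nlinarith [norm_nonneg (eAdd c u v)]
  refine ⟨?_, hlt⟩
  rw [gamma, hkey, hgu, hgv]
  have hsq : s ^ 2 * t ^ 2 / (1 + ⟪u, v⟫ / c ^ 2) ^ 2
      = (s * t / (1 + ⟪u, v⟫ / c ^ 2)) ^ 2 := by rw [div_pow, mul_pow]
  rw [hsq, Real.sqrt_sq (by positivity), one_div_div, div_mul_div_comm, one_mul,
    one_div_mul_eq_div]
end

section
/- Einstein addition is gyrocommutative: for all u, v in the c-ball V_c, u ⊕ v = gyr[u,v](v ⊕ u). -/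
open scoped RealInnerProductSpace

variable {V : Type*} [NormedAddCommGroup V] [InnerProductSpace ℝ V]

private lemma gamma_pos' {c : ℝ} (hc : 0 < c) {a : V} (ha : ‖a‖ < c) : 0 < gamma c a := by
  have h1 : ‖a‖ ^ 2 < c ^ 2 := by
    have := norm_nonneg a
    nlinarith
  have h2 : 0 < 1 - ‖a‖ ^ 2 / c ^ 2 := by
    rw [sub_pos, div_lt_one (by positivity)]; exact h1
  unfold gamma
  positivity

private lemma gamma_sq' {c : ℝ} (hc : 0 < c) {a : V} (ha : ‖a‖ < c) :
    ‖a‖ ^ 2 = c ^ 2 - c ^ 2 / (gamma c a) ^ 2 := by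
  have h1 : ‖a‖ ^ 2 < c ^ 2 := by
    have := norm_nonneg a; nlinarith
  have h2 : 0 < 1 - ‖a‖ ^ 2 / c ^ 2 := by
    rw [sub_pos, div_lt_one (by positivity)]; exact h1
  have : (gamma c a) ^ 2 = 1 / (1 - ‖a‖ ^ 2 / c ^ 2) := by
    unfold gamma
    rw [div_pow, one_pow, Real.sq_sqrt h2.le]
  rw [this]
  field_simp
  ring

private lemma den_pos' {c : ℝ} (hc : 0 < c) {a b : V} (ha : ‖a‖ < c) (hb : ‖b‖ < c) :
    0 < 1 + ⟪a, b⟫ / c ^ 2 := by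
  have h := abs_real_inner_le_norm a b
  have h2 : |⟪a, b⟫| < c ^ 2 := by
    rcases eq_or_ne a 0 with rfl | ha0
    · simp; positivity
    · have : 0 < ‖a‖ := norm_pos_iff.mpr ha0
      nlinarith [norm_nonneg b, abs_nonneg ⟪a,b⟫]
  have := (abs_lt.mp h2).1
  have hc2 : (0:ℝ) < c ^ 2 := by positivity
  have : -1 < ⟪a, b⟫ / c ^ 2 := by
    rw [lt_div_iff₀ hc2]; linarith
  linarith

private lemma one_sub_normSq' {c : ℝ} (hc : 0 < c) {a b : V} (ha : ‖a‖ < c) (hb : ‖b‖ < c) :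
    1 - ‖eAdd c a b‖ ^ 2 / c ^ 2 =
      1 / (gamma c a * gamma c b * (1 + ⟪a, b⟫ / c ^ 2)) ^ 2 := by
  have hA := gamma_pos' hc ha
  have hB := gamma_pos' hc hb
  have hA2 := gamma_sq' hc ha
  have hB2 := gamma_sq' hc hb
  have hd := den_pos' hc ha hb
  have h1A : (0:ℝ) < 1 + gamma c a := by linarith
  have hd1 : c ^ 2 + ⟪a, b⟫ ≠ 0 := by
    have key : c ^ 2 * (1 + ⟪a, b⟫ / c ^ 2) = c ^ 2 + ⟪a, b⟫ := by
      field_simp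
    have : 0 < c ^ 2 * (1 + ⟪a, b⟫ / c ^ 2) := mul_pos (by positivity) hd
    rw [key] at this
    exact this.ne'
  have hd2 : c ^ 2 + ⟪b, a⟫ ≠ 0 := by rwa [real_inner_comm]
  have hnormsq : ‖eAdd c a b‖ ^ 2 = ⟪eAdd c a b, eAdd c a b⟫ :=
    (real_inner_self_eq_norm_sq _).symm
  rw [hnormsq]
  simp only [eAdd, inner_add_left, inner_add_right, inner_smul_left, inner_smul_right,
    real_inner_self_eq_norm_sq, real_inner_comm b a, RCLike.ofReal_real_eq_id, id, conj_trivial]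
  rw [hA2, hB2]
  field_simp [hA.ne', hB.ne', h1A.ne', hc.ne', hd1, hd2]
  ring

private lemma gamma_eAdd' {c : ℝ} (hc : 0 < c) {a b : V} (ha : ‖a‖ < c) (hb : ‖b‖ < c) :
    gamma c (eAdd c a b) = gamma c a * gamma c b * (1 + ⟪a, b⟫ / c ^ 2) := by
  have hA := gamma_pos' hc ha
  have hB := gamma_pos' hc hb
  have hd := den_pos' hc ha hb
  have hX : 0 < gamma c a * gamma c b * (1 + ⟪a, b⟫ / c ^ 2) := by positivity
  show 1 / Real.sqrt (1 - ‖eAdd c a b‖ ^ 2 / c ^ 2) = _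
  rw [one_sub_normSq' hc ha hb, one_div ((gamma c a * gamma c b * (1 + ⟪a, b⟫ / c ^ 2)) ^ 2),
    Real.sqrt_inv, Real.sqrt_sq hX.le, one_div, inv_inv]

private lemma norm_eAdd_lt' {c : ℝ} (hc : 0 < c) {a b : V} (ha : ‖a‖ < c) (hb : ‖b‖ < c) :
    ‖eAdd c a b‖ < c := by
  have hA := gamma_pos' hc ha
  have hB := gamma_pos' hc hb
  have hd := den_pos' hc ha hb
  have h := one_sub_normSq' hc ha hb
  have hX : 0 < (1:ℝ) / (gamma c a * gamma c b * (1 + ⟪a, b⟫ / c ^ 2)) ^ 2 := by positivity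
  rw [← h, sub_pos, div_lt_one (by positivity : (0:ℝ) < c ^ 2)] at hX
  have := norm_nonneg (eAdd c a b)
  nlinarith

private lemma gamma_neg' (c : ℝ) (a : V) : gamma c (-a) = gamma c a := by simp [gamma]

private lemma eAdd_def (c : ℝ) (u v : V) : eAdd c u v =
    (1 / (1 + ⟪u, v⟫ / c ^ 2)) •
      (u + (1 / gamma c u) • v +
        ((1 / c ^ 2) * (gamma c u / (1 + gamma c u)) * ⟪u, v⟫) • u) := rfl

set_option maxHeartbeats 1000000 in
theorem einstein_gyrocommutative (c : ℝ) (hc : 0 < c) (u v : V)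
    (hu : ‖u‖ < c) (hv : ‖v‖ < c) :
    eAdd c u v = eGyr c u v (eAdd c v u) := by
  have hA := gamma_pos' hc hu
  have hB := gamma_pos' hc hv
  have h1A : (0:ℝ) < 1 + gamma c u := by linarith
  have h1B : (0:ℝ) < 1 + gamma c v := by linarith
  have hxu := gamma_sq' hc hu
  have hxv := gamma_sq' hc hv
  have n1 : ‖eAdd c v u‖ < c := norm_eAdd_lt' hc hv hu
  have n2 : ‖eAdd c v (eAdd c v u)‖ < c := norm_eAdd_lt' hc hv n1
  have n3 : ‖eAdd c u (eAdd c v (eAdd c v u))‖ < c := norm_eAdd_lt' hc hu n2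
  have hD : (0:ℝ) < c ^ 2 + ⟪u, v⟫ := by
    have h := den_pos' hc hu hv
    have key : c ^ 2 * (1 + ⟪u, v⟫ / c ^ 2) = c ^ 2 + ⟪u, v⟫ := by field_simp
    have h2 := mul_pos (show (0:ℝ) < c ^ 2 by positivity) h
    rwa [key] at h2
  -- step 1 : v ⊕ u
  have h1 : eAdd c v u =
      (c ^ 2 / (gamma c v * (c ^ 2 + ⟪u, v⟫))) • u +
      ((gamma c v * ⟪u, v⟫ + gamma c v * c ^ 2 + c ^ 2) /
        ((1 + gamma c v) * (c ^ 2 + ⟪u, v⟫))) • v := by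
    rw [eAdd_def c v u, real_inner_comm u v]
    match_scalars <;>
    · field_simp [hB.ne', h1B.ne', hD.ne'] <;>
      ring
  have i1 : ⟪v, eAdd c v u⟫ =
      (gamma c v ^ 2 * ⟪u, v⟫ * c ^ 2 + gamma c v ^ 2 * c ^ 4 - c ^ 4) /
        (gamma c v ^ 2 * (c ^ 2 + ⟪u, v⟫)) := by
    rw [h1]
    simp only [inner_add_right, real_inner_smul_right, real_inner_self_eq_norm_sq,
      real_inner_comm u v]
    rw [hxv]
    field_simp [hB.ne', h1B.ne', hD.ne']
    ring
  have i1' : 1 + ⟪v, eAdd c v u⟫ / c ^ 2 =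
      (2 * gamma c v ^ 2 * (c ^ 2 + ⟪u, v⟫) - c ^ 2) /
        (gamma c v ^ 2 * (c ^ 2 + ⟪u, v⟫)) := by
    rw [i1]
    field_simp [hB.ne', hD.ne']
    ring
  have hE : (0:ℝ) < 2 * gamma c v ^ 2 * (c ^ 2 + ⟪u, v⟫) - c ^ 2 := by
    have h := den_pos' hc hv n1
    rw [i1'] at h
    rcases div_pos_iff.mp h with ⟨hx, _⟩ | ⟨_, hy⟩
    · exact hx
    · exact absurd hy (by positivity : (0:ℝ) < gamma c v ^ 2 * (c ^ 2 + ⟪u, v⟫)).asymm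
  -- step 2 : v ⊕ (v ⊕ u)
  have h2 : eAdd c v (eAdd c v u) =
      (c ^ 2 / (2 * gamma c v ^ 2 * (c ^ 2 + ⟪u, v⟫) - c ^ 2)) • u +
      (2 * gamma c v ^ 2 * (c ^ 2 + ⟪u, v⟫) /
        (2 * gamma c v ^ 2 * (c ^ 2 + ⟪u, v⟫) - c ^ 2)) • v := by
    rw [eAdd_def c v (eAdd c v u), i1', i1, h1]
    match_scalars <;>
    · field_simp [hB.ne', h1B.ne', hD.ne', hE.ne'] <;>
      ring
  have i2 : ⟪u, eAdd c v (eAdd c v u)⟫ =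
      (2 * gamma c u ^ 2 * gamma c v ^ 2 * ⟪u, v⟫ ^ 2 +
        2 * gamma c u ^ 2 * gamma c v ^ 2 * ⟪u, v⟫ * c ^ 2 +
        gamma c u ^ 2 * c ^ 4 - c ^ 4) /
      (gamma c u ^ 2 * (2 * gamma c v ^ 2 * (c ^ 2 + ⟪u, v⟫) - c ^ 2)) := by
    rw [h2]
    simp only [inner_add_right, real_inner_smul_right, real_inner_self_eq_norm_sq]
    rw [hxu]
    field_simp [hA.ne', hE.ne']
    ring
  have i2' : 1 + ⟪u, eAdd c v (eAdd c v u)⟫ / c ^ 2 =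
      (2 * gamma c u ^ 2 * gamma c v ^ 2 * (c ^ 2 + ⟪u, v⟫) ^ 2 - c ^ 4) /
        (gamma c u ^ 2 * (2 * gamma c v ^ 2 * (c ^ 2 + ⟪u, v⟫) - c ^ 2) * c ^ 2) := by
    rw [i2]
    field_simp [hA.ne', hE.ne']
    ring
  have hF : (0:ℝ) < 2 * gamma c u ^ 2 * gamma c v ^ 2 * (c ^ 2 + ⟪u, v⟫) ^ 2 - c ^ 4 := by
    have h := den_pos' hc hu n2
    rw [i2'] at h
    rcases div_pos_iff.mp h with ⟨hx, _⟩ | ⟨_, hy⟩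
    · exact hx
    · refine absurd hy ?_
      have : (0:ℝ) < gamma c u ^ 2 * (2 * gamma c v ^ 2 * (c ^ 2 + ⟪u, v⟫) - c ^ 2) * c ^ 2 := by
        positivity
      exact this.asymm
  -- step 3 : u ⊕ (v ⊕ (v ⊕ u))
  have h3 : eAdd c u (eAdd c v (eAdd c v u)) =
      (2 * gamma c u ^ 2 * gamma c v ^ 2 * (c ^ 2 + ⟪u, v⟫) *
          (gamma c u * (c ^ 2 + ⟪u, v⟫) + c ^ 2) /
        ((1 + gamma c u) * (2 * gamma c u ^ 2 * gamma c v ^ 2 * (c ^ 2 + ⟪u, v⟫) ^ 2 - c ^ 4))) • u +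
      (2 * gamma c u * gamma c v ^ 2 * c ^ 2 * (c ^ 2 + ⟪u, v⟫) /
        (2 * gamma c u ^ 2 * gamma c v ^ 2 * (c ^ 2 + ⟪u, v⟫) ^ 2 - c ^ 4)) • v := by
    rw [eAdd_def c u (eAdd c v (eAdd c v u)), i2', i2, h2]
    match_scalars <;>
    · field_simp [hA.ne', h1A.ne', hD.ne', hE.ne', hF.ne'] <;>
      ring
  -- step 4 : u ⊕ v
  have h4 : eAdd c u v =
      ((gamma c u * ⟪u, v⟫ + gamma c u * c ^ 2 + c ^ 2) /
        ((1 + gamma c u) * (c ^ 2 + ⟪u, v⟫))) • u +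
      (c ^ 2 / (gamma c u * (c ^ 2 + ⟪u, v⟫))) • v := by
    rw [eAdd_def c u v]
    match_scalars <;>
    · field_simp [hA.ne', h1A.ne', hD.ne'] <;>
      ring
  have i3 : ⟪-(eAdd c u v), eAdd c u (eAdd c v (eAdd c v u))⟫ =
      2 * (c ^ 6 - gamma c u ^ 2 * gamma c v ^ 2 * c ^ 2 * (c ^ 2 + ⟪u, v⟫) ^ 2) /
        (2 * gamma c u ^ 2 * gamma c v ^ 2 * (c ^ 2 + ⟪u, v⟫) ^ 2 - c ^ 4) := by
    rw [inner_neg_left, h4, h3]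
    simp only [inner_add_left, inner_add_right, real_inner_smul_left, real_inner_smul_right,
      real_inner_self_eq_norm_sq, real_inner_comm u v]
    rw [hxu, hxv]
    field_simp [hA.ne', hB.ne', h1A.ne', hD.ne', hF.ne']
    ring
  have i3' : 1 + ⟪-(eAdd c u v), eAdd c u (eAdd c v (eAdd c v u))⟫ / c ^ 2 =
      c ^ 4 / (2 * gamma c u ^ 2 * gamma c v ^ 2 * (c ^ 2 + ⟪u, v⟫) ^ 2 - c ^ 4) := by
    rw [i3]
    field_simp [hF.ne']
    ring
  have g4 : gamma c (-(eAdd c u v)) =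
      gamma c u * gamma c v * (1 + ⟪u, v⟫ / c ^ 2) := by
    rw [gamma_neg']
    exact gamma_eAdd' hc hu hv
  have hg4 : (0:ℝ) < gamma c u * gamma c v * (1 + ⟪u, v⟫ / c ^ 2) :=
    mul_pos (mul_pos hA hB) (den_pos' hc hu hv)
  rw [eGyr, eAdd_def c (-(eAdd c u v)) (eAdd c u (eAdd c v (eAdd c v u))), g4, i3', i3, h3, h4]
  match_scalars <;>
  · field_simp [hA.ne', hB.ne', h1A.ne', h1B.ne', hD.ne', hE.ne', hF.ne', hg4.ne',
      (ne_of_gt (by linarith [hF]) :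
        gamma c u ^ 2 * (c ^ 2 + ⟪u, v⟫) ^ 2 * 2 * gamma c v ^ 2 - c ^ 4 ≠ 0)]
    ring
end

section
/- Einstein scalar multiplication obeys the scalar distributive law: for all real numbers r₁, r₂ and every v in the c-ball V_c, (r₁ + r₂) ⊙ v = (r₁ ⊙ v) ⊕ (r₂ ⊙ v). -/
open scoped RealInnerProductSpace

variable {V : Type*} [NormedAddCommGroup V] [InnerProductSpace ℝ V]

lemma my_abs_tanh_lt_one (x : ℝ) : |Real.tanh x| < 1 := by
  rw [Real.tanh_eq_sinh_div_cosh, abs_div, abs_of_pos (Real.cosh_pos x),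
    div_lt_one (Real.cosh_pos x)]
  have h := Real.cosh_sq_sub_sinh_sq x
  nlinarith [abs_nonneg (Real.sinh x), sq_abs (Real.sinh x), Real.cosh_pos x]

lemma my_tanh_add (x y : ℝ) :
    Real.tanh (x + y) = (Real.tanh x + Real.tanh y) / (1 + Real.tanh x * Real.tanh y) := by
  have hx := (Real.cosh_pos x).ne'
  have hy := (Real.cosh_pos y).ne'
  have hxy := (Real.cosh_pos (x + y)).ne'
  simp only [Real.tanh_eq_sinh_div_cosh]
  rw [Real.sinh_add, Real.cosh_add]
  have hx2 : |Real.sinh x| < Real.cosh x := by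
    nlinarith [Real.cosh_pos x, Real.cosh_sq_sub_sinh_sq x, abs_nonneg (Real.sinh x),
      sq_abs (Real.sinh x)]
  have hy2 : |Real.sinh y| < Real.cosh y := by
    nlinarith [Real.cosh_pos y, Real.cosh_sq_sub_sinh_sq y, abs_nonneg (Real.sinh y),
      sq_abs (Real.sinh y)]
  have h1 : Real.cosh x * Real.cosh y + Real.sinh x * Real.sinh y > 0 := by
    nlinarith [hx2, hy2, neg_abs_le (Real.sinh x * Real.sinh y),
      abs_mul (Real.sinh x) (Real.sinh y), abs_nonneg (Real.sinh x), abs_nonneg (Real.sinh y),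
      Real.cosh_pos x, Real.cosh_pos y]
  field_simp [Real.cosh_add, h1.ne']

theorem einstein_scalar_distributive (c : ℝ) (hc : 0 < c)
    (r₁ r₂ : ℝ) (v : V) (hv : ‖v‖ < c) :
    sMul c (r₁ + r₂) v = eAdd c (sMul c r₁ v) (sMul c r₂ v) := by
  by_cases hv0 : v = 0
  · subst hv0; simp [sMul, eAdd, gamma]
  · have hnv : 0 < ‖v‖ := norm_pos_iff.mpr hv0
    simp only [sMul, if_neg hv0, eAdd]
    set A := artanh (‖v‖ / c) with hA
    set a := Real.tanh (r₁ * A) with ha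
    set b := Real.tanh (r₂ * A) with hb
    have ha1 : |a| < 1 := my_abs_tanh_lt_one _
    have hb1 : |b| < 1 := my_abs_tanh_lt_one _
    have ha2 : a ^ 2 < 1 := by nlinarith [abs_nonneg a, sq_abs a]
    have hab : 0 < 1 + a * b := by
      nlinarith [abs_nonneg a, abs_nonneg b, sq_abs a, sq_abs b, abs_mul a b,
        neg_abs_le (a * b), abs_mul_abs_self a, abs_mul_abs_self b]
    set s := Real.sqrt (1 - a ^ 2) with hs
    have hs0 : 0 < s := Real.sqrt_pos.mpr (by linarith)
    have hs2 : s ^ 2 = 1 - a ^ 2 := Real.sq_sqrt (by linarith)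
    have hg : gamma c ((c * a / ‖v‖) • v) = 1 / s := by
      rw [gamma, hs]
      congr 2
      rw [norm_smul, mul_pow, Real.norm_eq_abs, sq_abs]
      field_simp
    have hinner : (⟪(c * a / ‖v‖) • v, (c * b / ‖v‖) • v⟫ : ℝ) = c ^ 2 * (a * b) := by
      rw [real_inner_smul_left, real_inner_smul_right, real_inner_self_eq_norm_sq]
      field_simp
    have htanh : Real.tanh ((r₁ + r₂) * A) = (a + b) / (1 + a * b) := by
      rw [add_mul, my_tanh_add, ← ha, ← hb]
    clear_value A
    clear_value a b
    clear_value s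
    rw [hg, hinner, htanh]
    rw [smul_smul, smul_smul, smul_add, smul_add, smul_smul, smul_smul, smul_smul]
    rw [← add_smul, ← add_smul]
    congr 1
    have h1s : (0:ℝ) < 1 + 1 / s := by positivity
    field_simp
    linear_combination (-b) * hs2
end

section
/- Einstein scalar multiplication obeys the scalar associative law: for all real numbers r₁, r₂ and every v in the c-ball V_c, (r₁·r₂) ⊙ v = r₁ ⊙ (r₂ ⊙ v). -/
open scoped RealInnerProductSpace

variable {V : Type*} [NormedAddCommGroup V] [InnerProductSpace ℝ V]

private lemma my_tanh_eq (x : ℝ) :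
    Real.tanh x = (Real.exp (2 * x) - 1) / (Real.exp (2 * x) + 1) := by
  have h1 : Real.exp x ≠ 0 := (Real.exp_pos x).ne'
  have h2 : Real.exp x + Real.exp (-x) > 0 := by positivity
  rw [Real.tanh_eq_sinh_div_cosh, Real.sinh_eq, Real.cosh_eq, two_mul, Real.exp_add,
    Real.exp_neg]
  field_simp

private lemma my_tanh_pos {x : ℝ} (hx : 0 < x) : 0 < Real.tanh x := by
  rw [my_tanh_eq]
  have : (1 : ℝ) < Real.exp (2 * x) := by
    have := Real.exp_lt_exp.mpr (show (0:ℝ) < 2 * x by linarith)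
    simpa using this
  have h2 : (0:ℝ) < Real.exp (2*x) + 1 := by positivity
  apply div_pos <;> linarith

private lemma my_tanh_lt_one (x : ℝ) : Real.tanh x < 1 := by
  rw [my_tanh_eq]
  have h := Real.exp_pos (2 * x)
  rw [div_lt_one (by linarith)]
  linarith

private lemma my_neg_one_lt_tanh (x : ℝ) : -1 < Real.tanh x := by
  have := my_tanh_lt_one (-x)
  rw [Real.tanh_neg] at this
  linarith

private lemma my_tanh_ne_zero {x : ℝ} (hx : x ≠ 0) : Real.tanh x ≠ 0 := by
  rcases hx.lt_or_gt with h | h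
  · have := my_tanh_pos (show 0 < -x by linarith)
    rw [Real.tanh_neg] at this; linarith
  · exact (my_tanh_pos h).ne'

private lemma my_tanh_artanh {y : ℝ} (h1 : -1 < y) (h2 : y < 1) :
    Real.tanh (artanh y) = y := by
  have hu : (0:ℝ) < (1 + y) / (1 - y) := by
    apply div_pos <;> linarith
  rw [my_tanh_eq]
  have : 2 * artanh y = Real.log ((1 + y) / (1 - y)) := by
    unfold artanh; ring
  rw [this, Real.exp_log hu]
  have hu1 : (0:ℝ) < (1 + y) / (1 - y) + 1 := by linarith
  rw [div_eq_iff hu1.ne']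
  have h1y : (1:ℝ) - y ≠ 0 := by linarith
  field_simp
  ring

private lemma my_artanh_tanh (x : ℝ) : artanh (Real.tanh x) = x := by
  have hE : (0:ℝ) < Real.exp (2 * x) := Real.exp_pos _
  rw [my_tanh_eq]
  unfold artanh
  have hE1 : Real.exp (2 * x) + 1 ≠ 0 := by positivity
  have h1 : 1 + (Real.exp (2 * x) - 1) / (Real.exp (2 * x) + 1) =
      2 * Real.exp (2 * x) / (Real.exp (2 * x) + 1) := by
    rw [eq_div_iff hE1]; field_simp; ring
  have h2 : 1 - (Real.exp (2 * x) - 1) / (Real.exp (2 * x) + 1) =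
      2 / (Real.exp (2 * x) + 1) := by
    field_simp
    ring_nf
  have h3 : 2 * Real.exp (2 * x) / (Real.exp (2 * x) + 1) / (2 / (Real.exp (2 * x) + 1)) =
      Real.exp (2 * x) := by
    field_simp
  rw [h1, h2, h3, Real.log_exp]
  ring

private lemma my_artanh_pos {y : ℝ} (h1 : 0 < y) (h2 : y < 1) : 0 < artanh y := by
  unfold artanh
  have : (1:ℝ) < (1 + y) / (1 - y) := by
    rw [lt_div_iff₀ (by linarith)]; linarith
  have := Real.log_pos this
  linarith

theorem einstein_scalar_associative (c : ℝ) (hc : 0 < c)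
    (r₁ r₂ : ℝ) (v : V) (hv : ‖v‖ < c) :
    sMul c (r₁ * r₂) v = sMul c r₁ (sMul c r₂ v) := by
  by_cases hv0 : v = 0
  · simp [sMul, hv0]
  have hvn : 0 < ‖v‖ := norm_pos_iff.mpr hv0
  set t := artanh (‖v‖ / c) with ht
  have htpos : 0 < t := my_artanh_pos (div_pos hvn hc) ((div_lt_one hc).mpr hv)
  by_cases hr2 : r₂ = 0
  · simp [sMul, hr2, hv0]
  have hrt : r₂ * t ≠ 0 := mul_ne_zero hr2 htpos.ne'
  have hT2 : Real.tanh (r₂ * t) ≠ 0 := my_tanh_ne_zero hrt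
  set s₂ : ℝ := c * Real.tanh (r₂ * t) / ‖v‖ with hs₂def
  have hs₂ : s₂ ≠ 0 := div_ne_zero (mul_ne_zero hc.ne' hT2) hvn.ne'
  have hw : sMul c r₂ v = s₂ • v := by simp [sMul, hv0]; rfl
  have hwne : s₂ • v ≠ 0 := smul_ne_zero hs₂ hv0
  have hnorm : ‖s₂ • v‖ = c * |Real.tanh (r₂ * t)| := by
    rw [norm_smul, Real.norm_eq_abs, hs₂def, abs_div, abs_mul, abs_of_pos hc, abs_norm]
    field_simp
  rw [hw]
  rw [show sMul c r₁ (s₂ • v) = (c * Real.tanh (r₁ * artanh (‖s₂ • v‖ / c)) / ‖s₂ • v‖) • s₂ • v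
    from by simp [sMul, hwne]]
  rw [show sMul c (r₁ * r₂) v = (c * Real.tanh ((r₁ * r₂) * t) / ‖v‖) • v
    from by simp [sMul, hv0, ht]]
  rw [hnorm, smul_smul]
  rcases Ne.lt_or_gt hr2 with hneg | hpos
  · have hT2neg : Real.tanh (r₂ * t) < 0 := by
      have := my_tanh_pos (show 0 < -(r₂ * t) by nlinarith)
      rw [Real.tanh_neg] at this; linarith
    have habs : |Real.tanh (r₂ * t)| = -Real.tanh (r₂ * t) := abs_of_neg hT2neg
    have hart : artanh (c * -Real.tanh (r₂ * t) / c) = -(r₂ * t) := by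
      rw [mul_comm, mul_div_assoc, div_self hc.ne', mul_one, ← Real.tanh_neg, my_artanh_tanh]
    rw [habs, hart]
    have h1 : Real.tanh (r₁ * -(r₂ * t)) = -Real.tanh (r₁ * r₂ * t) := by
      rw [show r₁ * -(r₂ * t) = -(r₁ * r₂ * t) by ring, Real.tanh_neg]
    rw [h1, hs₂def]
    congr 1
    field_simp
  · have hT2pos : 0 < Real.tanh (r₂ * t) := my_tanh_pos (mul_pos hpos htpos)
    have habs : |Real.tanh (r₂ * t)| = Real.tanh (r₂ * t) := abs_of_pos hT2pos
    have hart : artanh (c * Real.tanh (r₂ * t) / c) = r₂ * t := by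
      rw [mul_comm, mul_div_assoc, div_self hc.ne', mul_one, my_artanh_tanh]
    rw [habs, hart, hs₂def]
    congr 1
    rw [show r₁ * (r₂ * t) = r₁ * r₂ * t by ring]
    field_simp
end

section
/- The Einstein gyrodistance d(A,B) = ‖⊖A ⊕ B‖ obeys the gyrotriangle inequality: for all A, B, P in the c-ball V_c, ‖⊖A ⊕ B‖ ≤ (‖⊖A ⊕ P‖ + ‖⊖P ⊕ B‖)/(1 + ‖⊖A ⊕ P‖·‖⊖P ⊕ B‖/c²), where the right-hand side is the Einstein addition of the two nonnegative real numbers ‖⊖A ⊕ P‖ and ‖⊖P ⊕ B‖. -/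
open scoped RealInnerProductSpace

variable {V : Type*} [NormedAddCommGroup V] [InnerProductSpace ℝ V]

lemma gamma_facts (c : ℝ) (hc : 0 < c) (u : V) (hu : ‖u‖ < c) :
    1 ≤ gamma c u ∧ gamma c u ^ 2 * (c ^ 2 - ‖u‖ ^ 2) = c ^ 2 := by
  have h1 : (0:ℝ) < 1 - ‖u‖ ^ 2 / c ^ 2 := by
    have : ‖u‖ ^ 2 < c ^ 2 := by
      have := norm_nonneg u
      nlinarith
    have hc2 : (0:ℝ) < c ^ 2 := by positivity
    rw [sub_pos, div_lt_one hc2]; exact this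
  have hs : Real.sqrt (1 - ‖u‖ ^ 2 / c ^ 2) ≤ 1 := by
    have h2 : 0 ≤ ‖u‖ ^ 2 / c ^ 2 := by positivity
    calc Real.sqrt (1 - ‖u‖ ^ 2 / c ^ 2) ≤ Real.sqrt 1 := by
           apply Real.sqrt_le_sqrt; linarith
      _ = 1 := Real.sqrt_one
  have hspos : 0 < Real.sqrt (1 - ‖u‖ ^ 2 / c ^ 2) := Real.sqrt_pos.mpr h1
  constructor
  · rw [gamma, le_div_iff₀ hspos]; linarith
  · have hsq : Real.sqrt (1 - ‖u‖ ^ 2 / c ^ 2) ^ 2 = 1 - ‖u‖ ^ 2 / c ^ 2 :=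
      Real.sq_sqrt h1.le
    have key : gamma c u ^ 2 = 1 / (1 - ‖u‖ ^ 2 / c ^ 2) := by
      rw [gamma, div_pow, one_pow, hsq]
    rw [key]
    have hc2 : (0:ℝ) < c ^ 2 := by positivity
    have hne : c ^ 2 - ‖u‖ ^ 2 ≠ 0 := by
      have := norm_nonneg u; nlinarith
    field_simp [hne]


lemma norm_eAdd_sq (c : ℝ) (hc : 0 < c) (u v : V) (hu : ‖u‖ < c) (hv : ‖v‖ < c) :
    ‖eAdd c u v‖ ^ 2 =
      c ^ 2 - c ^ 2 * (c ^ 2 - ‖u‖ ^ 2) * (c ^ 2 - ‖v‖ ^ 2) / (c ^ 2 + ⟪u, v⟫) ^ 2 := by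
  obtain ⟨hg1, hg2⟩ := gamma_facts c hc u hu
  set g := gamma c u with hgdef
  have hgpos : 0 < g := by linarith
  have hc2 : (0:ℝ) < c ^ 2 := by positivity
  have hcs : |⟪u, v⟫| ≤ ‖u‖ * ‖v‖ := abs_real_inner_le_norm u v
  have htpos : 0 < c ^ 2 + ⟪u, v⟫ := by
    have h1 : -(‖u‖ * ‖v‖) ≤ ⟪u, v⟫ := neg_le_of_abs_le hcs
    have h2 : ‖u‖ * ‖v‖ < c ^ 2 := by
      have := norm_nonneg u; have := norm_nonneg v
      nlinarith
    linarith
  have hfac : 1 + ⟪u, v⟫ / c ^ 2 = (c ^ 2 + ⟪u, v⟫) / c ^ 2 := by field_simp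
  set k : ℝ := (1 / c ^ 2) * (g / (1 + g)) * ⟪u, v⟫ with hk
  have hexp : ‖eAdd c u v‖ ^ 2 =
      (1 / (1 + ⟪u, v⟫ / c ^ 2)) ^ 2 *
        ((1 + k) ^ 2 * ‖u‖ ^ 2 + 2 * ((1 + k) * (1 / g)) * ⟪u, v⟫
          + (1 / g) ^ 2 * ‖v‖ ^ 2) := by
    rw [eAdd, norm_smul, mul_pow]
    congr 1
    · rw [Real.norm_eq_abs, sq_abs]
    · have heq : u + (1 / g) • v + k • u = (1 + k) • u + (1 / g) • v := by
        module
      rw [heq, ← real_inner_self_eq_norm_sq]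
      simp only [inner_add_add_self, real_inner_smul_left, real_inner_smul_right,
        real_inner_self_eq_norm_sq, real_inner_comm v u, norm_smul, mul_pow,
        Real.norm_eq_abs, sq_abs]
      ring
  rw [hexp, hfac]
  have hgne : g ≠ 0 := ne_of_gt hgpos
  have h1g : (1:ℝ) + g ≠ 0 := by positivity
  have htne : c ^ 2 + ⟪u, v⟫ ≠ 0 := ne_of_gt htpos
  have hU : ‖u‖ ^ 2 = c ^ 2 * (g ^ 2 - 1) / g ^ 2 := by
    field_simp
    nlinarith [hg2]
  rw [hk, hU]
  field_simp
  ring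


lemma cs2 (P u z : V) (hP : ‖P‖ ≤ 1) :
    (⟪u, z⟫ - ⟪u, P⟫ * ⟪z, P⟫) ^ 2 ≤
      (‖u‖ ^ 2 - ⟪u, P⟫ ^ 2) * (‖z‖ ^ 2 - ⟪z, P⟫ ^ 2) := by
  set a := ⟪u, P⟫ with ha
  set b := ⟪z, P⟫ with hb
  set u' := u - a • P with hu'
  set z' := z - b • P with hz'
  set lam := 1 - ‖P‖ ^ 2 with hlam
  have hlam0 : 0 ≤ lam := by
    have := norm_nonneg P; nlinarith
  have h1 : ⟪u, z⟫ - a * b = ⟪u', z'⟫ + lam * (a * b) := by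
    simp only [hu', hz', inner_sub_left, inner_sub_right, real_inner_smul_left,
      real_inner_smul_right, real_inner_self_eq_norm_sq, hlam,
      real_inner_comm z P, real_inner_comm u P, ← ha, ← hb]
    ring
  have h2 : ‖u‖ ^ 2 - a ^ 2 = ‖u'‖ ^ 2 + lam * a ^ 2 := by
    rw [hu', ← real_inner_self_eq_norm_sq (u - a • P)]
    simp only [inner_sub_left, inner_sub_right, real_inner_smul_left,
      real_inner_smul_right, real_inner_self_eq_norm_sq, hlam,
      real_inner_comm u P, ← ha, norm_smul, mul_pow, Real.norm_eq_abs, sq_abs]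
    ring
  have h3 : ‖z‖ ^ 2 - b ^ 2 = ‖z'‖ ^ 2 + lam * b ^ 2 := by
    rw [hz', ← real_inner_self_eq_norm_sq (z - b • P)]
    simp only [inner_sub_left, inner_sub_right, real_inner_smul_left,
      real_inner_smul_right, real_inner_self_eq_norm_sq, hlam,
      real_inner_comm z P, ← hb, norm_smul, mul_pow, Real.norm_eq_abs, sq_abs]
    ring
  rw [h1, h2, h3]
  have hcs1 : ⟪u', z'⟫ ≤ ‖u'‖ * ‖z'‖ := real_inner_le_norm u' z'
  have hcs2 : -(‖u'‖ * ‖z'‖) ≤ ⟪u', z'⟫ := neg_le_of_abs_le (abs_real_inner_le_norm u' z')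
  have hm : 0 ≤ ‖u'‖ := norm_nonneg _
  have hn : 0 ≤ ‖z'‖ := norm_nonneg _
  nlinarith [mul_nonneg hlam0 (sq_nonneg (a * ‖z'‖ - b * ‖u'‖)),
    mul_nonneg hlam0 (sq_nonneg (a * ‖z'‖ + b * ‖u'‖)),
    mul_nonneg (sub_nonneg.mpr hcs1) (by linarith : (0:ℝ) ≤ ‖u'‖ * ‖z'‖ + ⟪u', z'⟫),
    mul_nonneg hlam0 (mul_nonneg hlam0 (sq_nonneg (a * b))),
    sq_nonneg (⟪u', z'⟫ - lam * a * b), sq_nonneg (⟪u', z'⟫ + lam * a * b)]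

lemma le_of_sq_le_sq' {L R : ℝ} (h : L ^ 2 ≤ R ^ 2) (hR : 0 ≤ R) : L ≤ R := by
  nlinarith [sq_nonneg (L - R), sq_nonneg (L + R)]

set_option maxHeartbeats 1000000 in
lemma scalar_main (c a b s x y d : ℝ) (p q r : ℝ) (hc : 0 < c)
    (hac : a < c ^ 2) (hbc : b < c ^ 2) (hsc : s < c ^ 2)
    (hα : 0 < c ^ 2 - p) (hβ : 0 < c ^ 2 - q) (hδ : 0 < c ^ 2 - r)
    (hx0 : 0 ≤ x) (hy0 : 0 ≤ y) (hd0 : 0 ≤ d)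
    (hd2 : d ^ 2 = c ^ 2 - c ^ 2 * (c ^ 2 - a) * (c ^ 2 - b) / (c ^ 2 - r) ^ 2)
    (hx2 : x ^ 2 = c ^ 2 - c ^ 2 * (c ^ 2 - a) * (c ^ 2 - s) / (c ^ 2 - p) ^ 2)
    (hy2 : y ^ 2 = c ^ 2 - c ^ 2 * (c ^ 2 - s) * (c ^ 2 - b) / (c ^ 2 - q) ^ 2)
    (hG : ((c ^ 2 - s) * (c ^ 2 - r) - (c ^ 2 - p) * (c ^ 2 - q)) ^ 2 ≤
      ((c ^ 2 - p) ^ 2 - (c ^ 2 - a) * (c ^ 2 - s)) *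
        ((c ^ 2 - q) ^ 2 - (c ^ 2 - s) * (c ^ 2 - b))) :
    d ≤ (x + y) / (1 + x * y / c ^ 2) := by
  have hc2 : (0 : ℝ) < c ^ 2 := by positivity
  have hcs : (0 : ℝ) < c ^ 2 - s := by linarith
  have hca : (0 : ℝ) < c ^ 2 - a := by linarith
  have hcb : (0 : ℝ) < c ^ 2 - b := by linarith
  set α := c ^ 2 - p with hαd
  set β := c ^ 2 - q with hβd
  set δ := c ^ 2 - r with hδd
  set M := α ^ 2 - (c ^ 2 - a) * (c ^ 2 - s) with hM
  set N := β ^ 2 - (c ^ 2 - s) * (c ^ 2 - b) with hN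
  have hαne : α ≠ 0 := ne_of_gt hα
  have hβne : β ≠ 0 := ne_of_gt hβ
  have hδne : δ ≠ 0 := ne_of_gt hδ
  have hx2' : x ^ 2 = c ^ 2 * M / α ^ 2 := by
    rw [hx2, hM]; field_simp
  have hy2' : y ^ 2 = c ^ 2 * N / β ^ 2 := by
    rw [hy2, hN]; field_simp
  have hxy2 : (α * β * (x * y)) ^ 2 = c ^ 4 * (M * N) := by
    have h : (α * β * (x * y)) ^ 2 = α ^ 2 * x ^ 2 * (β ^ 2 * y ^ 2) := by ring
    rw [h, hx2', hy2']
    field_simp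
  have hxyR : c ^ 2 * ((c ^ 2 - s) * δ - α * β) ≤ α * β * (x * y) := by
    apply le_of_sq_le_sq' _ (by positivity)
    rw [hxy2]
    calc (c ^ 2 * ((c ^ 2 - s) * δ - α * β)) ^ 2
        = c ^ 4 * (((c ^ 2 - s) * δ - α * β) ^ 2) := by ring
      _ ≤ c ^ 4 * (M * N) := by
          apply mul_le_mul_of_nonneg_left _ (by positivity)
          calc ((c ^ 2 - s) * δ - α * β) ^ 2
              = ((c ^ 2 - s) * (c ^ 2 - r) - (c ^ 2 - p) * (c ^ 2 - q)) ^ 2 := by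
                rw [hαd, hβd, hδd]
            _ ≤ M * N := hG
  have key : c ^ 2 * ((c ^ 2 - s) * δ) ≤ α * β * (c ^ 2 + x * y) := by nlinarith [hxyR]
  have hxypos : (0 : ℝ) < c ^ 2 + x * y := by positivity
  have keysq : (c ^ 2 * ((c ^ 2 - s) * δ)) ^ 2 ≤ (α * β * (c ^ 2 + x * y)) ^ 2 := by
    have h0 : (0 : ℝ) ≤ c ^ 2 * ((c ^ 2 - s) * δ) := by positivity
    exact pow_le_pow_left₀ h0 key 2
  set e := (x + y) / (1 + x * y / c ^ 2) with he
  have hden : (0 : ℝ) < 1 + x * y / c ^ 2 := by positivity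
  have he0 : 0 ≤ e := by positivity
  have step1 : c ^ 2 - e ^ 2 =
      c ^ 2 * (c ^ 2 - x ^ 2) * (c ^ 2 - y ^ 2) / (c ^ 2 + x * y) ^ 2 := by
    rw [he]
    have hdne : (1 : ℝ) + x * y / c ^ 2 ≠ 0 := ne_of_gt hden
    field_simp
    ring
  have hcx : c ^ 2 - x ^ 2 = c ^ 2 * (c ^ 2 - a) * (c ^ 2 - s) / α ^ 2 := by
    rw [hx2]; ring
  have hcy : c ^ 2 - y ^ 2 = c ^ 2 * (c ^ 2 - s) * (c ^ 2 - b) / β ^ 2 := by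
    rw [hy2]; ring
  have hcd : c ^ 2 - d ^ 2 = c ^ 2 * (c ^ 2 - a) * (c ^ 2 - b) / δ ^ 2 := by
    rw [hd2]; ring
  have step2 : c ^ 2 * (c ^ 2 - x ^ 2) * (c ^ 2 - y ^ 2) / (c ^ 2 + x * y) ^ 2 ≤
      c ^ 2 - d ^ 2 := by
    rw [hcx, hcy, hcd]
    have hL : c ^ 2 * (c ^ 2 * (c ^ 2 - a) * (c ^ 2 - s) / α ^ 2) *
        (c ^ 2 * (c ^ 2 - s) * (c ^ 2 - b) / β ^ 2) / (c ^ 2 + x * y) ^ 2 =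
        c ^ 6 * (c ^ 2 - a) * (c ^ 2 - b) * (c ^ 2 - s) ^ 2 /
          (α ^ 2 * β ^ 2 * (c ^ 2 + x * y) ^ 2) := by
      field_simp
    rw [hL, div_le_div_iff₀ (by positivity) (by positivity)]
    have hfac : (0 : ℝ) ≤ c ^ 2 * (c ^ 2 - a) * (c ^ 2 - b) := by positivity
    calc c ^ 6 * (c ^ 2 - a) * (c ^ 2 - b) * (c ^ 2 - s) ^ 2 * δ ^ 2
        = c ^ 2 * (c ^ 2 - a) * (c ^ 2 - b) * (c ^ 2 * ((c ^ 2 - s) * δ)) ^ 2 := by ring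
      _ ≤ c ^ 2 * (c ^ 2 - a) * (c ^ 2 - b) * (α * β * (c ^ 2 + x * y)) ^ 2 :=
          mul_le_mul_of_nonneg_left keysq hfac
      _ = c ^ 2 * (c ^ 2 - a) * (c ^ 2 - b) * (α ^ 2 * β ^ 2 * (c ^ 2 + x * y) ^ 2) := by
          ring
  have hd2e2 : d ^ 2 ≤ e ^ 2 := by linarith
  exact le_of_sq_le_sq' hd2e2 he0

theorem einstein_gyrotriangle_inequality (c : ℝ) (hc : 0 < c) (A B P : V)
    (hA : ‖A‖ < c) (hB : ‖B‖ < c) (hP : ‖P‖ < c) :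
    ‖eAdd c (-A) B‖ ≤
      (‖eAdd c (-A) P‖ + ‖eAdd c (-P) B‖) /
        (1 + ‖eAdd c (-A) P‖ * ‖eAdd c (-P) B‖ / c ^ 2) := by
  have hc2 : (0 : ℝ) < c ^ 2 := by positivity
  have hA2 : ‖A‖ ^ 2 < c ^ 2 := by nlinarith [norm_nonneg A]
  have hB2 : ‖B‖ ^ 2 < c ^ 2 := by nlinarith [norm_nonneg B]
  have hP2 : ‖P‖ ^ 2 < c ^ 2 := by nlinarith [norm_nonneg P]
  have hip : ∀ u v : V, ‖u‖ < c → ‖v‖ < c → 0 < c ^ 2 - ⟪u, v⟫ := by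
    intro u v hu hv
    have h1 : ⟪u, v⟫ ≤ ‖u‖ * ‖v‖ := real_inner_le_norm u v
    have h2 : ‖u‖ * ‖v‖ < c ^ 2 := by nlinarith [norm_nonneg u, norm_nonneg v]
    linarith
  have hα := hip A P hA hP
  have hβ := hip P B hP hB
  have hδ := hip A B hA hB
  -- norm-squared formulas
  have hnA : ‖(-A : V)‖ < c := by rwa [norm_neg]
  have hnP : ‖(-P : V)‖ < c := by rwa [norm_neg]
  have hd2 : ‖eAdd c (-A) B‖ ^ 2 =
      c ^ 2 - c ^ 2 * (c ^ 2 - ‖A‖ ^ 2) * (c ^ 2 - ‖B‖ ^ 2) / (c ^ 2 - ⟪A, B⟫) ^ 2 := by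
    have h := norm_eAdd_sq c hc (-A) B hnA hB
    rw [norm_neg, inner_neg_left] at h
    rw [h]
    ring_nf
  have hx2 : ‖eAdd c (-A) P‖ ^ 2 =
      c ^ 2 - c ^ 2 * (c ^ 2 - ‖A‖ ^ 2) * (c ^ 2 - ‖P‖ ^ 2) / (c ^ 2 - ⟪A, P⟫) ^ 2 := by
    have h := norm_eAdd_sq c hc (-A) P hnA hP
    rw [norm_neg, inner_neg_left] at h
    rw [h]
    ring_nf
  have hy2 : ‖eAdd c (-P) B‖ ^ 2 =
      c ^ 2 - c ^ 2 * (c ^ 2 - ‖P‖ ^ 2) * (c ^ 2 - ‖B‖ ^ 2) / (c ^ 2 - ⟪P, B⟫) ^ 2 := by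
    have h := norm_eAdd_sq c hc (-P) B hnP hB
    rw [norm_neg, inner_neg_left] at h
    rw [h]
    ring_nf
  -- the Gram inequality
  have hG : ((c ^ 2 - ‖P‖ ^ 2) * (c ^ 2 - ⟪A, B⟫) - (c ^ 2 - ⟪A, P⟫) * (c ^ 2 - ⟪P, B⟫)) ^ 2 ≤
      ((c ^ 2 - ⟪A, P⟫) ^ 2 - (c ^ 2 - ‖A‖ ^ 2) * (c ^ 2 - ‖P‖ ^ 2)) *
        ((c ^ 2 - ⟪P, B⟫) ^ 2 - (c ^ 2 - ‖P‖ ^ 2) * (c ^ 2 - ‖B‖ ^ 2)) := by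
    have hcne : c ≠ 0 := ne_of_gt hc
    set P' : V := c⁻¹ • P with hP'd
    set u : V := (c ^ 2 - ‖P‖ ^ 2) • A - (c ^ 2 - ⟪A, P⟫) • P with hud
    set z : V := (c ^ 2 - ‖P‖ ^ 2) • B - (c ^ 2 - ⟪P, B⟫) • P with hzd
    have hP'n : ‖P'‖ ≤ 1 := by
      rw [hP'd, norm_smul, Real.norm_eq_abs, abs_of_pos (by positivity : (0:ℝ) < c⁻¹)]
      rw [inv_mul_le_iff₀ hc]
      linarith
    have I1 : ‖u‖ ^ 2 - ⟪u, P'⟫ ^ 2 = (c ^ 2 - ‖P‖ ^ 2) *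
        ((c ^ 2 - ⟪A, P⟫) ^ 2 - (c ^ 2 - ‖A‖ ^ 2) * (c ^ 2 - ‖P‖ ^ 2)) := by
      rw [hud, hP'd, ← real_inner_self_eq_norm_sq]
      simp only [inner_sub_left, inner_sub_right, real_inner_smul_left, real_inner_smul_right,
        real_inner_self_eq_norm_sq, real_inner_comm P A, norm_smul, mul_pow,
        Real.norm_eq_abs, sq_abs]
      field_simp
      ring
    have I2 : ‖z‖ ^ 2 - ⟪z, P'⟫ ^ 2 = (c ^ 2 - ‖P‖ ^ 2) *
        ((c ^ 2 - ⟪P, B⟫) ^ 2 - (c ^ 2 - ‖P‖ ^ 2) * (c ^ 2 - ‖B‖ ^ 2)) := by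
      rw [hzd, hP'd, ← real_inner_self_eq_norm_sq]
      simp only [inner_sub_left, inner_sub_right, real_inner_smul_left, real_inner_smul_right,
        real_inner_self_eq_norm_sq, real_inner_comm P B, norm_smul, mul_pow,
        Real.norm_eq_abs, sq_abs]
      field_simp
      ring
    have I3 : ⟪u, z⟫ - ⟪u, P'⟫ * ⟪z, P'⟫ = (c ^ 2 - ‖P‖ ^ 2) *
        ((c ^ 2 - ⟪A, P⟫) * (c ^ 2 - ⟪P, B⟫) - (c ^ 2 - ‖P‖ ^ 2) * (c ^ 2 - ⟪A, B⟫)) := by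
      rw [hud, hzd, hP'd]
      simp only [inner_sub_left, inner_sub_right, real_inner_smul_left, real_inner_smul_right,
        real_inner_self_eq_norm_sq, real_inner_comm P A, real_inner_comm P B,
        real_inner_comm B A, norm_smul, mul_pow, Real.norm_eq_abs, sq_abs]
      field_simp
      ring
    have hcs := cs2 P' u z hP'n
    rw [I1, I2, I3] at hcs
    have hspos : (0 : ℝ) < (c ^ 2 - ‖P‖ ^ 2) ^ 2 :=
      pow_pos (by linarith : (0:ℝ) < c ^ 2 - ‖P‖ ^ 2) 2
    have h' : (c ^ 2 - ‖P‖ ^ 2) ^ 2 *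
        (((c ^ 2 - ‖P‖ ^ 2) * (c ^ 2 - ⟪A, B⟫) - (c ^ 2 - ⟪A, P⟫) * (c ^ 2 - ⟪P, B⟫)) ^ 2) ≤
        (c ^ 2 - ‖P‖ ^ 2) ^ 2 *
        (((c ^ 2 - ⟪A, P⟫) ^ 2 - (c ^ 2 - ‖A‖ ^ 2) * (c ^ 2 - ‖P‖ ^ 2)) *
          ((c ^ 2 - ⟪P, B⟫) ^ 2 - (c ^ 2 - ‖P‖ ^ 2) * (c ^ 2 - ‖B‖ ^ 2))) := by
      calc (c ^ 2 - ‖P‖ ^ 2) ^ 2 *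
          (((c ^ 2 - ‖P‖ ^ 2) * (c ^ 2 - ⟪A, B⟫) - (c ^ 2 - ⟪A, P⟫) * (c ^ 2 - ⟪P, B⟫)) ^ 2)
          = ((c ^ 2 - ‖P‖ ^ 2) *
              ((c ^ 2 - ⟪A, P⟫) * (c ^ 2 - ⟪P, B⟫) - (c ^ 2 - ‖P‖ ^ 2) * (c ^ 2 - ⟪A, B⟫))) ^ 2 := by
            ring
        _ ≤ (c ^ 2 - ‖P‖ ^ 2) *
              ((c ^ 2 - ⟪A, P⟫) ^ 2 - (c ^ 2 - ‖A‖ ^ 2) * (c ^ 2 - ‖P‖ ^ 2)) *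
              ((c ^ 2 - ‖P‖ ^ 2) *
                ((c ^ 2 - ⟪P, B⟫) ^ 2 - (c ^ 2 - ‖P‖ ^ 2) * (c ^ 2 - ‖B‖ ^ 2))) := hcs
        _ = (c ^ 2 - ‖P‖ ^ 2) ^ 2 *
            (((c ^ 2 - ⟪A, P⟫) ^ 2 - (c ^ 2 - ‖A‖ ^ 2) * (c ^ 2 - ‖P‖ ^ 2)) *
              ((c ^ 2 - ⟪P, B⟫) ^ 2 - (c ^ 2 - ‖P‖ ^ 2) * (c ^ 2 - ‖B‖ ^ 2))) := by ring
    exact le_of_mul_le_mul_left h' hspos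
  exact scalar_main c (‖A‖ ^ 2) (‖B‖ ^ 2) (‖P‖ ^ 2)
    (‖eAdd c (-A) P‖) (‖eAdd c (-P) B‖) (‖eAdd c (-A) B‖)
    ⟪A, P⟫ ⟪P, B⟫ ⟪A, B⟫ hc hA2 hB2 hP2 hα hβ hδ
    (norm_nonneg _) (norm_nonneg _) (norm_nonneg _) hd2 hx2 hy2 hG
end

section
/- Möbius coaddition admits the explicit representation u ⊞_M v = (γ_u²·u + γ_v²·v)/(γ_u² + γ_v² − 1) for all u, v in the s-ball V_s; in particular, Möbius coaddition is commutative. -/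
open scoped RealInnerProductSpace

variable {V : Type*} [NormedAddCommGroup V] [InnerProductSpace ℝ V]

set_option maxHeartbeats 1000000
lemma norm_pq (p q : ℝ) (u v : V) :
    ‖p • u + q • v‖ ^ 2 = p ^ 2 * ‖u‖ ^ 2 + 2 * p * q * ⟪u, v⟫ + q ^ 2 * ‖v‖ ^ 2 := by
  rw [← real_inner_self_eq_norm_sq]
  simp only [inner_add_left, inner_add_right, real_inner_smul_left, real_inner_smul_right,
    real_inner_comm v u]
  rw [real_inner_self_eq_norm_sq, real_inner_self_eq_norm_sq]
  ring

lemma inner_pq_left (p q : ℝ) (u v : V) :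
    ⟪p • u + q • v, u⟫ = p * ‖u‖ ^ 2 + q * ⟪u, v⟫ := by
  simp only [inner_add_left, real_inner_smul_left, real_inner_self_eq_norm_sq,
    real_inner_comm v u]

lemma inner_pq_right (p q : ℝ) (u v : V) :
    ⟪u, p • u + q • v⟫ = p * ‖u‖ ^ 2 + q * ⟪u, v⟫ := by
  simp only [inner_add_right, real_inner_smul_right, real_inner_self_eq_norm_sq]

lemma quad_pos (s : ℝ) (hs : 0 < s) (x y : V) (hx : ‖x‖ < s) (hy : ‖y‖ < s) :
    0 < s ^ 4 + 2 * ⟪x, y⟫ * s ^ 2 + ‖x‖ ^ 2 * ‖y‖ ^ 2 := by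
  have h := abs_real_inner_le_norm x y
  have h1 := (abs_le.mp h).1
  have h2 : ‖x‖ * ‖y‖ < s ^ 2 := by nlinarith [norm_nonneg x, norm_nonneg y]
  nlinarith [sq_nonneg (s ^ 2 - ‖x‖ * ‖y‖)]

lemma mAdd_eq (s : ℝ) (hs : 0 < s) (x y : V)
    (hD : 0 < s ^ 4 + 2 * ⟪x, y⟫ * s ^ 2 + ‖x‖ ^ 2 * ‖y‖ ^ 2) :
    mAdd s x y =
      (s ^ 2 * (s ^ 2 + 2 * ⟪x, y⟫ + ‖y‖ ^ 2) /
          (s ^ 4 + 2 * ⟪x, y⟫ * s ^ 2 + ‖x‖ ^ 2 * ‖y‖ ^ 2)) • x +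
      (s ^ 2 * (s ^ 2 - ‖x‖ ^ 2) /
          (s ^ 4 + 2 * ⟪x, y⟫ * s ^ 2 + ‖x‖ ^ 2 * ‖y‖ ^ 2)) • y := by
  have hs' : s ≠ 0 := hs.ne'
  have h : 1 + (2 / s ^ 2) * ⟪x, y⟫ + (1 / s ^ 4) * ‖x‖ ^ 2 * ‖y‖ ^ 2
      = (s ^ 4 + 2 * ⟪x, y⟫ * s ^ 2 + ‖x‖ ^ 2 * ‖y‖ ^ 2) / s ^ 4 := by
    field_simp
  rw [mAdd, h, one_div_div]
  match_scalars <;> field_simp <;> ring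

lemma norm_mAdd_lt (s : ℝ) (hs : 0 < s) (x y : V) (hx : ‖x‖ < s) (hy : ‖y‖ < s) :
    ‖mAdd s x y‖ < s := by
  have hq := quad_pos s hs x y hx hy
  have hs' : s ≠ 0 := hs.ne'
  have hn : ‖mAdd s x y‖ ^ 2 =
      (s ^ 2 * (s ^ 2 + 2 * ⟪x, y⟫ + ‖y‖ ^ 2) /
          (s ^ 4 + 2 * ⟪x, y⟫ * s ^ 2 + ‖x‖ ^ 2 * ‖y‖ ^ 2)) ^ 2 * ‖x‖ ^ 2
        + 2 * (s ^ 2 * (s ^ 2 + 2 * ⟪x, y⟫ + ‖y‖ ^ 2) /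
          (s ^ 4 + 2 * ⟪x, y⟫ * s ^ 2 + ‖x‖ ^ 2 * ‖y‖ ^ 2))
          * (s ^ 2 * (s ^ 2 - ‖x‖ ^ 2) /
          (s ^ 4 + 2 * ⟪x, y⟫ * s ^ 2 + ‖x‖ ^ 2 * ‖y‖ ^ 2)) * ⟪x, y⟫
        + (s ^ 2 * (s ^ 2 - ‖x‖ ^ 2) /
          (s ^ 4 + 2 * ⟪x, y⟫ * s ^ 2 + ‖x‖ ^ 2 * ‖y‖ ^ 2)) ^ 2 * ‖y‖ ^ 2 := by
    rw [mAdd_eq s hs x y hq, norm_pq]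
  have key : s ^ 2 - ‖mAdd s x y‖ ^ 2 =
      (s ^ 2 - ‖x‖ ^ 2) * (s ^ 2 - ‖y‖ ^ 2) * s ^ 2 /
        (s ^ 4 + 2 * ⟪x, y⟫ * s ^ 2 + ‖x‖ ^ 2 * ‖y‖ ^ 2) := by
    rw [hn]
    obtain ⟨D, hD⟩ : ∃ D, D = s ^ 4 + 2 * ⟪x, y⟫ * s ^ 2 + ‖x‖ ^ 2 * ‖y‖ ^ 2 := ⟨_, rfl⟩
    have hD0 : D ≠ 0 := hD ▸ hq.ne'
    rw [← hD]
    field_simp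
    subst hD
    ring
  have hpos : 0 < s ^ 2 - ‖mAdd s x y‖ ^ 2 := by
    rw [key]
    apply div_pos _ hq
    have h1 : 0 < s ^ 2 - ‖x‖ ^ 2 := by nlinarith [norm_nonneg x]
    have h2 : 0 < s ^ 2 - ‖y‖ ^ 2 := by nlinarith [norm_nonneg y]
    positivity
  nlinarith [norm_nonneg (mAdd s x y)]

lemma mAdd_zero_right (s : ℝ) (u : V) : mAdd s u 0 = u := by
  simp [mAdd]

lemma mAdd_neg_self (s : ℝ) (v : V) : mAdd s (-v) v = 0 := by
  rw [mAdd]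
  simp only [inner_neg_left, norm_neg, real_inner_self_eq_norm_sq]
  match_scalars
  ring

lemma mCoadd_repr (s : ℝ) (hs : 0 < s) (u v : V) (hu : ‖u‖ < s) (hv : ‖v‖ < s) :
    mCoadd s u v =
      (s ^ 2 * (s ^ 2 - ‖v‖ ^ 2) / (s ^ 4 - ‖u‖ ^ 2 * ‖v‖ ^ 2)) • u +
      (s ^ 2 * (s ^ 2 - ‖u‖ ^ 2) / (s ^ 4 - ‖u‖ ^ 2 * ‖v‖ ^ 2)) • v := by
  have hs' : s ≠ 0 := hs.ne'
  have hnv : ‖-v‖ < s := by rwa [norm_neg]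
  have hsA : (0:ℝ) < s ^ 2 - ‖u‖ ^ 2 := by nlinarith [norm_nonneg u]
  have hsB : (0:ℝ) < s ^ 2 - ‖v‖ ^ 2 := by nlinarith [norm_nonneg v]
  have hAB : (0:ℝ) < s ^ 4 - ‖u‖ ^ 2 * ‖v‖ ^ 2 := by nlinarith [norm_nonneg u, norm_nonneg v, sq_nonneg (‖u‖*‖v‖)]
  have hr : mCoadd s u v = mAdd s u (mAdd s (-(mAdd s u (-v))) u) := by
    rw [mCoadd, mGyr, mAdd_neg_self, mAdd_zero_right]
  have hd1pos : 0 < s ^ 4 + 2 * ⟪u, -v⟫ * s ^ 2 + ‖u‖ ^ 2 * ‖-v‖ ^ 2 :=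
    quad_pos s hs u (-v) hu hnv
  have hd1pos' : 0 < s ^ 4 - 2 * ⟪u, v⟫ * s ^ 2 + ‖u‖ ^ 2 * ‖v‖ ^ 2 := by
    have h0 := hd1pos
    rw [inner_neg_right, norm_neg] at h0
    nlinarith [h0]
  have hd1ne : s ^ 4 - 2 * ⟪u, v⟫ * s ^ 2 + ‖u‖ ^ 2 * ‖v‖ ^ 2 ≠ 0 := hd1pos'.ne'
  have hd1neA : s ^ 4 + 2 * -⟪u, v⟫ * s ^ 2 + ‖u‖ ^ 2 * ‖v‖ ^ 2 ≠ 0 := by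
    have he : s ^ 4 + 2 * -⟪u, v⟫ * s ^ 2 + ‖u‖ ^ 2 * ‖v‖ ^ 2
        = s ^ 4 - 2 * ⟪u, v⟫ * s ^ 2 + ‖u‖ ^ 2 * ‖v‖ ^ 2 := by ring
    rw [he]; exact hd1ne
  have hd1neB : -(s ^ 2 * ⟪u, v⟫ * 2) + s ^ 4 + ‖v‖ ^ 2 * ‖u‖ ^ 2 ≠ 0 := by
    have he : -(s ^ 2 * ⟪u, v⟫ * 2) + s ^ 4 + ‖v‖ ^ 2 * ‖u‖ ^ 2
        = s ^ 4 - 2 * ⟪u, v⟫ * s ^ 2 + ‖u‖ ^ 2 * ‖v‖ ^ 2 := by ring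
    rw [he]; exact hd1ne
  have hd1neC : -(s ^ 2 * ⟪u, v⟫ * 2) + s ^ 4 + ‖u‖ ^ 2 * ‖v‖ ^ 2 ≠ 0 := by
    have he : -(s ^ 2 * ⟪u, v⟫ * 2) + s ^ 4 + ‖u‖ ^ 2 * ‖v‖ ^ 2
        = s ^ 4 - 2 * ⟪u, v⟫ * s ^ 2 + ‖u‖ ^ 2 * ‖v‖ ^ 2 := by ring
    rw [he]; exact hd1ne
  have hw : mAdd s u (-v) =
      (s ^ 2 * (s ^ 2 - 2 * ⟪u, v⟫ + ‖v‖ ^ 2) / (s ^ 4 - 2 * ⟪u, v⟫ * s ^ 2 + ‖u‖ ^ 2 * ‖v‖ ^ 2)) • u + (-(s ^ 2 * (s ^ 2 - ‖u‖ ^ 2)) / (s ^ 4 - 2 * ⟪u, v⟫ * s ^ 2 + ‖u‖ ^ 2 * ‖v‖ ^ 2)) • v := by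
    rw [mAdd_eq s hs u (-v) hd1pos, inner_neg_right, norm_neg]
    match_scalars <;> ring
  have hwlt : ‖mAdd s u (-v)‖ < s := norm_mAdd_lt s hs u (-v) hu hnv
  have hnwlt : ‖-(mAdd s u (-v))‖ < s := by rwa [norm_neg]
  have hiw : ⟪mAdd s u (-v), u⟫ = (s ^ 2 * (s ^ 2 - 2 * ⟪u, v⟫ + ‖v‖ ^ 2) / (s ^ 4 - 2 * ⟪u, v⟫ * s ^ 2 + ‖u‖ ^ 2 * ‖v‖ ^ 2)) * ‖u‖ ^ 2 + (-(s ^ 2 * (s ^ 2 - ‖u‖ ^ 2)) / (s ^ 4 - 2 * ⟪u, v⟫ * s ^ 2 + ‖u‖ ^ 2 * ‖v‖ ^ 2)) * ⟪u, v⟫ := by rw [hw, inner_pq_left]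
  have hnw : ‖mAdd s u (-v)‖ ^ 2 = (s ^ 2 * (s ^ 2 - 2 * ⟪u, v⟫ + ‖v‖ ^ 2) / (s ^ 4 - 2 * ⟪u, v⟫ * s ^ 2 + ‖u‖ ^ 2 * ‖v‖ ^ 2)) ^ 2 * ‖u‖ ^ 2 + 2 * (s ^ 2 * (s ^ 2 - 2 * ⟪u, v⟫ + ‖v‖ ^ 2) / (s ^ 4 - 2 * ⟪u, v⟫ * s ^ 2 + ‖u‖ ^ 2 * ‖v‖ ^ 2)) * (-(s ^ 2 * (s ^ 2 - ‖u‖ ^ 2)) / (s ^ 4 - 2 * ⟪u, v⟫ * s ^ 2 + ‖u‖ ^ 2 * ‖v‖ ^ 2)) * ⟪u, v⟫ + (-(s ^ 2 * (s ^ 2 - ‖u‖ ^ 2)) / (s ^ 4 - 2 * ⟪u, v⟫ * s ^ 2 + ‖u‖ ^ 2 * ‖v‖ ^ 2)) ^ 2 * ‖v‖ ^ 2 := by rw [hw, norm_pq]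
  have hd2pos : 0 < s ^ 4 + 2 * ⟪-(mAdd s u (-v)), u⟫ * s ^ 2 + ‖-(mAdd s u (-v))‖ ^ 2 * ‖u‖ ^ 2 :=
    quad_pos s hs (-(mAdd s u (-v))) u hnwlt hu
  have hT1 : s ^ 2 * (s ^ 2 + 2 * -((s ^ 2 * (s ^ 2 - 2 * ⟪u, v⟫ + ‖v‖ ^ 2) / (s ^ 4 - 2 * ⟪u, v⟫ * s ^ 2 + ‖u‖ ^ 2 * ‖v‖ ^ 2)) * ‖u‖ ^ 2 + (-(s ^ 2 * (s ^ 2 - ‖u‖ ^ 2)) / (s ^ 4 - 2 * ⟪u, v⟫ * s ^ 2 + ‖u‖ ^ 2 * ‖v‖ ^ 2)) * ⟪u, v⟫) + ‖u‖ ^ 2)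
      = s ^ 2 * (s ^ 2 - ‖u‖ ^ 2) * (s ^ 4 - ‖u‖ ^ 2 * ‖v‖ ^ 2) / (s ^ 4 - 2 * ⟪u, v⟫ * s ^ 2 + ‖u‖ ^ 2 * ‖v‖ ^ 2) := by
    obtain ⟨D, hD⟩ : ∃ D, D = s ^ 4 - 2 * ⟪u, v⟫ * s ^ 2 + ‖u‖ ^ 2 * ‖v‖ ^ 2 := ⟨_, rfl⟩
    have hD0 : D ≠ 0 := hD ▸ hd1ne
    rw [← hD]
    field_simp
    subst hD
    ring
  have hT2 : s ^ 2 * (s ^ 2 - ((s ^ 2 * (s ^ 2 - 2 * ⟪u, v⟫ + ‖v‖ ^ 2) / (s ^ 4 - 2 * ⟪u, v⟫ * s ^ 2 + ‖u‖ ^ 2 * ‖v‖ ^ 2)) ^ 2 * ‖u‖ ^ 2 + 2 * (s ^ 2 * (s ^ 2 - 2 * ⟪u, v⟫ + ‖v‖ ^ 2) / (s ^ 4 - 2 * ⟪u, v⟫ * s ^ 2 + ‖u‖ ^ 2 * ‖v‖ ^ 2)) * (-(s ^ 2 * (s ^ 2 - ‖u‖ ^ 2)) / (s ^ 4 - 2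 * ⟪u, v⟫ * s ^ 2 + ‖u‖ ^ 2 * ‖v‖ ^ 2)) * ⟪u, v⟫ + (-(s ^ 2 * (s ^ 2 - ‖u‖ ^ 2)) / (s ^ 4 - 2 * ⟪u, v⟫ * s ^ 2 + ‖u‖ ^ 2 * ‖v‖ ^ 2)) ^ 2 * ‖v‖ ^ 2))
      = s ^ 4 * (s ^ 2 - ‖u‖ ^ 2) * (s ^ 2 - ‖v‖ ^ 2) / (s ^ 4 - 2 * ⟪u, v⟫ * s ^ 2 + ‖u‖ ^ 2 * ‖v‖ ^ 2) := by
    obtain ⟨D, hD⟩ : ∃ D, D = s ^ 4 - 2 * ⟪u, v⟫ * s ^ 2 + ‖u‖ ^ 2 * ‖v‖ ^ 2 := ⟨_, rfl⟩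
    have hD0 : D ≠ 0 := hD ▸ hd1ne
    rw [← hD]
    field_simp
    subst hD
    ring
  have hT3 : s ^ 4 + 2 * -((s ^ 2 * (s ^ 2 - 2 * ⟪u, v⟫ + ‖v‖ ^ 2) / (s ^ 4 - 2 * ⟪u, v⟫ * s ^ 2 + ‖u‖ ^ 2 * ‖v‖ ^ 2)) * ‖u‖ ^ 2 + (-(s ^ 2 * (s ^ 2 - ‖u‖ ^ 2)) / (s ^ 4 - 2 * ⟪u, v⟫ * s ^ 2 + ‖u‖ ^ 2 * ‖v‖ ^ 2)) * ⟪u, v⟫) * s ^ 2 + ((s ^ 2 * (s ^ 2 - 2 * ⟪u, v⟫ + ‖v‖ ^ 2) / (s ^ 4 - 2 * ⟪u, v⟫ * s ^ 2 + ‖u‖ ^ 2 * ‖v‖ ^ 2)) ^ 2 * ‖u‖ ^ 2 + 2 * (s ^ 2 * (s ^ 2 - 2 * ⟪u, v⟫ + ‖v‖ ^ 2) / (s ^ 4 - 2 * ⟪u, v⟫ * s ^ 2 + ‖u‖ ^ 2 * ‖v‖ ^ 2)) * (-(s ^ 2 * (s ^ 2 - ‖u‖ ^ 2)) / (s ^ 4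 - 2 * ⟪u, v⟫ * s ^ 2 + ‖u‖ ^ 2 * ‖v‖ ^ 2)) * ⟪u, v⟫ + (-(s ^ 2 * (s ^ 2 - ‖u‖ ^ 2)) / (s ^ 4 - 2 * ⟪u, v⟫ * s ^ 2 + ‖u‖ ^ 2 * ‖v‖ ^ 2)) ^ 2 * ‖v‖ ^ 2) * ‖u‖ ^ 2
      = s ^ 4 * (s ^ 2 - ‖u‖ ^ 2) ^ 2 / (s ^ 4 - 2 * ⟪u, v⟫ * s ^ 2 + ‖u‖ ^ 2 * ‖v‖ ^ 2) := by
    obtain ⟨D, hD⟩ : ∃ D, D = s ^ 4 - 2 * ⟪u, v⟫ * s ^ 2 + ‖u‖ ^ 2 * ‖v‖ ^ 2 := ⟨_, rfl⟩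
    have hD0 : D ≠ 0 := hD ▸ hd1ne
    rw [← hD]
    field_simp
    subst hD
    ring
  have hx : mAdd s (-(mAdd s u (-v))) u = (-2 * ‖v‖ ^ 2 * (s ^ 2 - ⟪u, v⟫) / (s ^ 4 - 2 * ⟪u, v⟫ * s ^ 2 + ‖u‖ ^ 2 * ‖v‖ ^ 2)) • u + ((s ^ 4 - ‖u‖ ^ 2 * ‖v‖ ^ 2) / (s ^ 4 - 2 * ⟪u, v⟫ * s ^ 2 + ‖u‖ ^ 2 * ‖v‖ ^ 2)) • v := by
    rw [mAdd_eq s hs (-(mAdd s u (-v))) u hd2pos, inner_neg_left, norm_neg, hiw, hnw, hT1, hT2, hT3, hw]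
    obtain ⟨D, hD⟩ : ∃ D, D = s ^ 4 - 2 * ⟪u, v⟫ * s ^ 2 + ‖u‖ ^ 2 * ‖v‖ ^ 2 := ⟨_, rfl⟩
    have hD0 : D ≠ 0 := hD ▸ hd1ne
    rw [← hD]
    match_scalars <;> field_simp [hD0, hsA.ne'] <;> (subst hD; ring)
  have hxlt : ‖mAdd s (-(mAdd s u (-v))) u‖ < s := norm_mAdd_lt s hs (-(mAdd s u (-v))) u hnwlt hu
  have hix : ⟪u, mAdd s (-(mAdd s u (-v))) u⟫ = (-2 * ‖v‖ ^ 2 * (s ^ 2 - ⟪u, v⟫) / (s ^ 4 - 2 * ⟪u, v⟫ * s ^ 2 + ‖u‖ ^ 2 * ‖v‖ ^ 2)) * ‖u‖ ^ 2 + ((s ^ 4 - ‖u‖ ^ 2 * ‖v‖ ^ 2) / (s ^ 4 - 2 * ⟪u, v⟫ * s ^ 2 + ‖u‖ ^ 2 * ‖v‖ ^ 2)) * ⟪u, v⟫ := by rw [hx, inner_pq_right]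
  have hnx : ‖mAdd s (-(mAdd s u (-v))) u‖ ^ 2 = (-2 * ‖v‖ ^ 2 * (s ^ 2 - ⟪u, v⟫) / (s ^ 4 - 2 * ⟪u, v⟫ * s ^ 2 + ‖u‖ ^ 2 * ‖v‖ ^ 2)) ^ 2 * ‖u‖ ^ 2 + 2 * (-2 * ‖v‖ ^ 2 * (s ^ 2 - ⟪u, v⟫) / (s ^ 4 - 2 * ⟪u, v⟫ * s ^ 2 + ‖u‖ ^ 2 * ‖v‖ ^ 2)) * ((s ^ 4 - ‖u‖ ^ 2 * ‖v‖ ^ 2) / (s ^ 4 - 2 * ⟪u, v⟫ * s ^ 2 + ‖u‖ ^ 2 * ‖v‖ ^ 2)) * ⟪u, v⟫ + ((s ^ 4 - ‖u‖ ^ 2 * ‖v‖ ^ 2) / (s ^ 4 - 2 * ⟪u, v⟫ * s ^ 2 + ‖u‖ ^ 2 * ‖v‖ ^ 2)) ^ 2 * ‖v‖ ^ 2 := by rw [hx, norm_pq]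
  have hd3pos : 0 < s ^ 4 + 2 * ⟪u, mAdd s (-(mAdd s u (-v))) u⟫ * s ^ 2 + ‖u‖ ^ 2 * ‖mAdd s (-(mAdd s u (-v))) u‖ ^ 2 :=
    quad_pos s hs u (mAdd s (-(mAdd s u (-v))) u) hu hxlt
  have hU1 : s ^ 2 * (s ^ 2 + 2 * ((-2 * ‖v‖ ^ 2 * (s ^ 2 - ⟪u, v⟫) / (s ^ 4 - 2 * ⟪u, v⟫ * s ^ 2 + ‖u‖ ^ 2 * ‖v‖ ^ 2)) * ‖u‖ ^ 2 + ((s ^ 4 - ‖u‖ ^ 2 * ‖v‖ ^ 2) / (s ^ 4 - 2 * ⟪u, v⟫ * s ^ 2 + ‖u‖ ^ 2 * ‖v‖ ^ 2)) * ⟪u, v⟫) + ((-2 * ‖v‖ ^ 2 * (s ^ 2 - ⟪u, v⟫) / (s ^ 4 - 2 * ⟪u, v⟫ * s ^ 2 + ‖u‖ ^ 2 * ‖v‖ ^ 2)) ^ 2 * ‖u‖ ^ 2 + 2 * (-2 * ‖v‖ ^ 2 * (s ^ 2 - ⟪u, v⟫) / (s ^ 4 - 2 * ⟪u, v⟫ *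 s ^ 2 + ‖u‖ ^ 2 * ‖v‖ ^ 2)) * ((s ^ 4 - ‖u‖ ^ 2 * ‖v‖ ^ 2) / (s ^ 4 - 2 * ⟪u, v⟫ * s ^ 2 + ‖u‖ ^ 2 * ‖v‖ ^ 2)) * ⟪u, v⟫ + ((s ^ 4 - ‖u‖ ^ 2 * ‖v‖ ^ 2) / (s ^ 4 - 2 * ⟪u, v⟫ * s ^ 2 + ‖u‖ ^ 2 * ‖v‖ ^ 2)) ^ 2 * ‖v‖ ^ 2))
      = (s ^ 8 + ‖v‖ ^ 2 * s ^ 6 - 3 * ‖u‖ ^ 2 * ‖v‖ ^ 2 * s ^ 4 + ‖u‖ ^ 2 * ‖v‖ ^ 2 ^ 2 * s ^ 2 - 2 * ⟪u, v⟫ * ‖v‖ ^ 2 * s ^ 4 + 2 * ⟪u, v⟫ * ‖u‖ ^ 2 * ‖v‖ ^ 2 * s ^ 2) / (s ^ 4 - 2 * ⟪u, v⟫ * s ^ 2 + ‖u‖ ^ 2 * ‖v‖ ^ 2) := by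
    obtain ⟨D, hD⟩ : ∃ D, D = s ^ 4 - 2 * ⟪u, v⟫ * s ^ 2 + ‖u‖ ^ 2 * ‖v‖ ^ 2 := ⟨_, rfl⟩
    have hD0 : D ≠ 0 := hD ▸ hd1ne
    rw [← hD]
    field_simp
    subst hD
    ring
  have hD3 : s ^ 4 + 2 * ((-2 * ‖v‖ ^ 2 * (s ^ 2 - ⟪u, v⟫) / (s ^ 4 - 2 * ⟪u, v⟫ * s ^ 2 + ‖u‖ ^ 2 * ‖v‖ ^ 2)) * ‖u‖ ^ 2 + ((s ^ 4 - ‖u‖ ^ 2 * ‖v‖ ^ 2) / (s ^ 4 - 2 * ⟪u, v⟫ * s ^ 2 + ‖u‖ ^ 2 * ‖v‖ ^ 2)) * ⟪u, v⟫) * s ^ 2 + ‖u‖ ^ 2 * ((-2 * ‖v‖ ^ 2 * (s ^ 2 - ⟪u, v⟫) / (s ^ 4 - 2 * ⟪u, v⟫ * s ^ 2 + ‖u‖ ^ 2 * ‖v‖ ^ 2)) ^ 2 * ‖u‖ ^ 2 + 2 * (-2 * ‖v‖ ^ 2 * (s ^ 2 - ⟪u, v⟫) / (s ^ 4 - 2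 * ⟪u, v⟫ * s ^ 2 + ‖u‖ ^ 2 * ‖v‖ ^ 2)) * ((s ^ 4 - ‖u‖ ^ 2 * ‖v‖ ^ 2) / (s ^ 4 - 2 * ⟪u, v⟫ * s ^ 2 + ‖u‖ ^ 2 * ‖v‖ ^ 2)) * ⟪u, v⟫ + ((s ^ 4 - ‖u‖ ^ 2 * ‖v‖ ^ 2) / (s ^ 4 - 2 * ⟪u, v⟫ * s ^ 2 + ‖u‖ ^ 2 * ‖v‖ ^ 2)) ^ 2 * ‖v‖ ^ 2)
      = (s ^ 4 - ‖u‖ ^ 2 * ‖v‖ ^ 2) ^ 2 / (s ^ 4 - 2 * ⟪u, v⟫ * s ^ 2 + ‖u‖ ^ 2 * ‖v‖ ^ 2) := by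
    obtain ⟨D, hD⟩ : ∃ D, D = s ^ 4 - 2 * ⟪u, v⟫ * s ^ 2 + ‖u‖ ^ 2 * ‖v‖ ^ 2 := ⟨_, rfl⟩
    have hD0 : D ≠ 0 := hD ▸ hd1ne
    rw [← hD]
    field_simp
    subst hD
    ring
  rw [hr, mAdd_eq s hs u (mAdd s (-(mAdd s u (-v))) u) hd3pos, hix, hnx, hU1, hD3, hx]
  obtain ⟨D, hD⟩ : ∃ D, D = s ^ 4 - 2 * ⟪u, v⟫ * s ^ 2 + ‖u‖ ^ 2 * ‖v‖ ^ 2 := ⟨_, rfl⟩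
  have hD0 : D ≠ 0 := hD ▸ hd1ne
  rw [← hD]
  obtain ⟨A, hA⟩ : ∃ A, A = s ^ 4 - ‖u‖ ^ 2 * ‖v‖ ^ 2 := ⟨_, rfl⟩
  have hA0 : A ≠ 0 := hA ▸ hAB.ne'
  rw [← hA]
  match_scalars <;> field_simp [hD0, hA0, hsA.ne'] <;> (subst hD; subst hA; ring)
theorem mobius_coaddition_formula (s : ℝ) (hs : 0 < s) (u v : V)
    (hu : ‖u‖ < s) (hv : ‖v‖ < s) :
    mCoadd s u v =
      (1 / (gamma s u ^ 2 + gamma s v ^ 2 - 1)) •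
        (gamma s u ^ 2 • u + gamma s v ^ 2 • v) ∧
    mCoadd s u v = mCoadd s v u := by
  have hs' : s ≠ 0 := hs.ne'
  have hsA : (0:ℝ) < s ^ 2 - ‖u‖ ^ 2 := by nlinarith [norm_nonneg u]
  have hsB : (0:ℝ) < s ^ 2 - ‖v‖ ^ 2 := by nlinarith [norm_nonneg v]
  have hAB : (0:ℝ) < s ^ 4 - ‖u‖ ^ 2 * ‖v‖ ^ 2 := by
    nlinarith [norm_nonneg u, norm_nonneg v, sq_nonneg (‖u‖ * ‖v‖)]
  have hgamma : ∀ w : V, ‖w‖ < s → gamma s w ^ 2 = s ^ 2 / (s ^ 2 - ‖w‖ ^ 2) := by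
    intro w hw
    have hsW : (0:ℝ) < s ^ 2 - ‖w‖ ^ 2 := by nlinarith [norm_nonneg w]
    have h1 : (0:ℝ) ≤ 1 - ‖w‖ ^ 2 / s ^ 2 := by
      rw [sub_nonneg, div_le_one (by positivity)]
      nlinarith
    rw [gamma, div_pow, one_pow, Real.sq_sqrt h1]
    rw [show 1 - ‖w‖ ^ 2 / s ^ 2 = (s ^ 2 - ‖w‖ ^ 2) / s ^ 2 from by field_simp, one_div_div]
  have hgu := hgamma u hu
  have hgv := hgamma v hv
  constructor
  · rw [mCoadd_repr s hs u v hu hv, hgu, hgv]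
    have hsum : s ^ 2 / (s ^ 2 - ‖u‖ ^ 2) + s ^ 2 / (s ^ 2 - ‖v‖ ^ 2) - 1
        = (s ^ 4 - ‖u‖ ^ 2 * ‖v‖ ^ 2) / ((s ^ 2 - ‖u‖ ^ 2) * (s ^ 2 - ‖v‖ ^ 2)) := by
      field_simp
      ring
    rw [hsum]
    match_scalars <;> field_simp <;> ring
  · rw [mCoadd_repr s hs u v hu hv, mCoadd_repr s hs v u hv hu]
    match_scalars <;> ring
end
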